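/- arXiv:2305.17275 — 6 statements merged into one kernel-verified Lean document; each statement's English description precedes it below -/
import Mathlib

section
/- Let n ≥ 1. Let Q and R be fixed n×n real symmetric positive semidefinite matrices, let S be the 2n×2n block-diagonal matrix diag(Q,R), and let U and V be independent random n×n matrices each distributed according to the Haar probability measure on the orthogonal group O(n). Let N_1, …, N_n, M_1, …, M_n be i.i.d. random variables with the chi-squared distribution with n degrees of freedom (i.e., the Gamma distribution with shape n/2 and rate 1/2), independent of (U, V). Set μ := min_{1≤j≤n} (u_j^⊤ Q u_j + v_j^⊤ R v_j), where u_j, v_j are the j-th columns of U, V. Then (1/n)·E[ min_{1≤j≤n} (N_j·u_j^⊤ Q u_j + M_j·v_j^⊤ R v_j) ] ≤ E[μ] ≤ trace(S)/n. -/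
open MeasureTheory ProbabilityTheory Matrix

noncomputable section

instance matMeas {k m : Type*} : MeasurableSpace (Matrix k m ℝ) := MeasurableSpace.pi

/-- `μ = min_{j ≤ n} (u_j^⊤ Q u_j + v_j^⊤ R v_j)` where `u_j`, `v_j` are the columns of `U`, `V`. -/
def colMin {n : ℕ} (Q R U V : Matrix (Fin n) (Fin n) ℝ) : ℝ :=
  ⨅ j : Fin n,
    (((fun i => U i j) ⬝ᵥ Q.mulVec fun i => U i j) +
      ((fun i => V i j) ⬝ᵥ R.mulVec fun i => V i j))

/-- The law of `U` is the Haar probability measure on the orthogonal group `O(n)`: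
`U` is a.s. orthogonal and its law is invariant under left translation by every element of
`O(n)`.  (These properties uniquely characterize the Haar probability measure on `O(n)`.) -/
def IsHaarOrthogonal {Ω : Type*} [MeasurableSpace Ω] (P : Measure Ω) {n : ℕ}
    (U : Ω → Matrix (Fin n) (Fin n) ℝ) : Prop :=
  Measurable U ∧ (∀ᵐ ω ∂P, U ω ∈ Matrix.orthogonalGroup (Fin n) ℝ) ∧
    ∀ A ∈ Matrix.orthogonalGroup (Fin n) ℝ,
      Measure.map (fun ω => A * U ω) P = Measure.map U P

/-! ### Auxiliary lemmas on the Gamma distribution -/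

section GammaAux
open Real Set

lemma gamma_Iio_zero (a r : ℝ) : gammaMeasure a r (Iio 0) = 0 := by
  rw [gammaMeasure, withDensity_apply _ measurableSet_Iio]
  exact lintegral_gammaPDF_of_nonpos le_rfl

lemma gamma_ae_nonneg (a r : ℝ) : ∀ᵐ x ∂(gammaMeasure a r), 0 ≤ x := by
  rw [ae_iff]
  convert gamma_Iio_zero a r using 2
  ext x; simp [Iio]

lemma integrableOn_pdf_mul_id {a r : ℝ} (ha : 0 < a) (hr : 0 < r) :
    IntegrableOn (fun x => gammaPDFReal a r x * x) (Ioi 0) := by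
  have h := (integrableOn_rpow_mul_exp_neg_mul_rpow (s := a) (p := 1) (b := r)
    (by linarith) one_pos hr).const_mul (r ^ a / Gamma a)
  refine IntegrableOn.congr_fun h (fun x hx => ?_) measurableSet_Ioi
  have hx : (0:ℝ) < x := hx
  rw [Real.rpow_one, gammaPDFReal, if_pos hx.le,
    show x ^ a = x ^ (a - 1) * x by rw [← Real.rpow_add_one hx.ne' (a-1)]; ring_nf]
  ring_nf

lemma gamma_real_integral {a r : ℝ} (ha : 0 < a) (hr : 0 < r) :
    ∫ x in Ioi 0, gammaPDFReal a r x * x = a / r := by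
  have h1 : ∀ x ∈ Ioi (0:ℝ), gammaPDFReal a r x * x
      = (r ^ a / Gamma a) * (x ^ ((a + 1) - 1) * exp (-(r * x))) := by
    intro x hx
    have hx : (0:ℝ) < x := hx
    rw [gammaPDFReal, if_pos hx.le,
      show (a + 1) - 1 = (a - 1) + 1 by ring, Real.rpow_add_one hx.ne']
    ring
  rw [setIntegral_congr_fun measurableSet_Ioi h1, integral_const_mul,
    integral_rpow_mul_exp_neg_mul_Ioi (by linarith) hr,
    Real.Gamma_add_one ha.ne']
  rw [div_rpow (by norm_num) hr.le, one_rpow]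
  have hg := Real.Gamma_pos_of_pos ha
  have hra := Real.rpow_pos_of_pos hr a
  have hra1 := Real.rpow_pos_of_pos hr (a+1)
  rw [show r ^ (a+1) = r ^ a * r by rw [Real.rpow_add_one hr.ne']]
  field_simp

lemma measurable_gammaPDF (a r : ℝ) : Measurable (gammaPDF a r) :=
  (measurable_gammaPDFReal a r).ennreal_ofReal

lemma gamma_lintegral_ofReal {a r : ℝ} (ha : 0 < a) (hr : 0 < r) :
    ∫⁻ x, ENNReal.ofReal x ∂(gammaMeasure a r) = ENNReal.ofReal (a / r) := by
  rw [gammaMeasure, lintegral_withDensity_eq_lintegral_mul _ (measurable_gammaPDF a r)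
    ENNReal.measurable_ofReal]
  have hsplit : ∫⁻ x, (gammaPDF a r * fun x => ENNReal.ofReal x) x
      = (∫⁻ x in Iio 0, (gammaPDF a r * fun x => ENNReal.ofReal x) x)
        + ∫⁻ x in Ici 0, (gammaPDF a r * fun x => ENNReal.ofReal x) x := by
    rw [← lintegral_add_compl _ measurableSet_Iio, compl_Iio]
  rw [hsplit]
  have h0 : ∫⁻ x in Iio 0, (gammaPDF a r * fun x => ENNReal.ofReal x) x = 0 := by
    rw [setLIntegral_congr_fun (g := fun _ => 0) measurableSet_Iio
      (fun x (hx : x < 0) => by simp [gammaPDF_of_neg hx])]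
    simp
  have hIci : ∫⁻ x in Ici 0, (gammaPDF a r * fun x => ENNReal.ofReal x) x
      = ∫⁻ x in Ioi 0, (gammaPDF a r * fun x => ENNReal.ofReal x) x := by
    refine (setLIntegral_congr ?_)
    exact (Ioi_ae_eq_Ici (a := (0:ℝ))).symm
  rw [h0, zero_add, hIci]
  have heq : ∀ x ∈ Ioi (0:ℝ), (gammaPDF a r * fun x => ENNReal.ofReal x) x
      = ENNReal.ofReal (gammaPDFReal a r x * x) := by
    intro x hx
    have hx : (0:ℝ) < x := hx
    rw [Pi.mul_apply, gammaPDF, ← ENNReal.ofReal_mul (gammaPDFReal_nonneg ha hr x)]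
  have hnn : 0 ≤ᵐ[volume.restrict (Ioi 0)] fun x => gammaPDFReal a r x * x := by
    refine ae_restrict_of_ae (ae_of_all _ (fun x => ?_))
    rcases le_or_gt 0 x with hx | hx
    · exact mul_nonneg (gammaPDFReal_nonneg ha hr x) hx
    · simp [gammaPDFReal, not_le.mpr hx]
  rw [setLIntegral_congr_fun measurableSet_Ioi heq,
    ← ofReal_integral_eq_lintegral_ofReal (integrableOn_pdf_mul_id ha hr) hnn,
    gamma_real_integral ha hr]

lemma gamma_integrable_id {a r : ℝ} (ha : 0 < a) (hr : 0 < r) :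
    Integrable (fun x : ℝ => x) (gammaMeasure a r) := by
  refine ⟨aestronglyMeasurable_id, ?_⟩
  rw [HasFiniteIntegral]
  have : ∫⁻ x, ‖x‖ₑ ∂(gammaMeasure a r) = ∫⁻ x, ENNReal.ofReal x ∂(gammaMeasure a r) := by
    refine lintegral_congr_ae ?_
    filter_upwards [gamma_ae_nonneg a r] with x hx
    rw [Real.enorm_eq_ofReal hx]
  rw [this, gamma_lintegral_ofReal ha hr]
  exact ENNReal.ofReal_lt_top

lemma gamma_integral_id {a r : ℝ} (ha : 0 < a) (hr : 0 < r) :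
    ∫ x, x ∂(gammaMeasure a r) = a / r := by
  rw [integral_eq_lintegral_of_nonneg_ae (gamma_ae_nonneg a r) aestronglyMeasurable_id,
    gamma_lintegral_ofReal ha hr, ENNReal.toReal_ofReal (by positivity)]

end GammaAux

/-! ### Auxiliary lemmas on column quadratic forms -/

section MatAux

lemma sum_colQuad {n : ℕ} (Q M : Matrix (Fin n) (Fin n) ℝ)
    (hM : M ∈ Matrix.orthogonalGroup (Fin n) ℝ) :
    ∑ j, ((fun i => M i j) ⬝ᵥ Q.mulVec fun i => M i j) = Q.trace := by
  have h1 : ∀ j, ((fun i => M i j) ⬝ᵥ Q.mulVec fun i => M i j) = (Mᵀ * Q * M) j j := by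
    intro j
    simp [dotProduct, mulVec, mul_apply, transpose_apply, Finset.mul_sum, Finset.sum_mul]
    rw [Finset.sum_comm]
    refine Finset.sum_congr rfl (fun i _ => Finset.sum_congr rfl (fun k _ => by ring))
  simp_rw [h1]
  have h2 : (∑ j, (Mᵀ * Q * M) j j) = (Mᵀ * Q * M).trace := rfl
  rw [h2, Matrix.trace_mul_cycle]
  have hMM : M * Mᵀ = 1 := by
    have := (Matrix.mem_orthogonalGroup_iff (Fin n) ℝ).mp hM
    simpa [star_eq_conjTranspose, conjTranspose_eq_transpose_of_trivial] using this
  rw [hMM, Matrix.one_mul]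

lemma colQuad_nonneg {n : ℕ} {Q : Matrix (Fin n) (Fin n) ℝ} (hQ : Q.PosSemidef)
    (M : Matrix (Fin n) (Fin n) ℝ) (j : Fin n) :
    0 ≤ ((fun i => M i j) ⬝ᵥ Q.mulVec fun i => M i j) := by
  simpa using hQ.dotProduct_mulVec_nonneg (fun i => M i j)

lemma trace_nonneg_of_psd {n : ℕ} {Q : Matrix (Fin n) (Fin n) ℝ} (hQ : Q.PosSemidef) :
    0 ≤ Q.trace := by
  rw [← sum_colQuad Q 1 (one_mem _)]
  exact Finset.sum_nonneg fun j _ => colQuad_nonneg hQ 1 j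

lemma measurable_colQuad {n : ℕ} (Q : Matrix (Fin n) (Fin n) ℝ) (j : Fin n) :
    Measurable (fun M : Matrix (Fin n) (Fin n) ℝ =>
      ((fun i => M i j) ⬝ᵥ Q.mulVec fun i => M i j)) := by
  have hentry : ∀ k : Fin n, Measurable fun M : Matrix (Fin n) (Fin n) ℝ => M k j := by
    intro k
    exact (measurable_pi_apply j).comp (measurable_pi_apply k)
  simp only [dotProduct, mulVec]
  refine Finset.measurable_sum Finset.univ
    (f := fun i (M : Matrix (Fin n) (Fin n) ℝ) => M i j * ∑ k, Q i k * M k j) fun i _ => ?_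
  exact (hentry i).mul (Finset.measurable_sum _ fun k _ => (hentry k).const_mul _)

end MatAux

/-! ### A measurable argmin selection over a finite index -/

section Part
open Set
variable {E : Type*} [MeasurableSpace E] {n : ℕ} [NeZero n]

omit [MeasurableSpace E] in
lemma argmin_nonempty (g : Fin n → E → ℝ) (x : E) :
    (Finset.univ.filter fun j => ∀ k, g j x ≤ g k x).Nonempty := by
  obtain ⟨j, -, hj⟩ := Finset.exists_min_image Finset.univ (fun j => g j x)
    Finset.univ_nonempty
  exact ⟨j, Finset.mem_filter.mpr ⟨Finset.mem_univ _, fun k => hj k (Finset.mem_univ k)⟩⟩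

/-- the least index at which `j ↦ g j x` attains its minimum -/
noncomputable def jmin (g : Fin n → E → ℝ) (x : E) : Fin n :=
  (Finset.univ.filter fun j => ∀ k, g j x ≤ g k x).min' (argmin_nonempty g x)

omit [MeasurableSpace E] in
lemma jmin_spec (g : Fin n → E → ℝ) (x : E) : ∀ k, g (jmin g x) x ≤ g k x := by
  have := Finset.min'_mem _ (argmin_nonempty g x)
  exact (Finset.mem_filter.mp this).2

omit [MeasurableSpace E] in
lemma jmin_eq_iff (g : Fin n → E → ℝ) (x : E) (j : Fin n) :
    jmin g x = j ↔ ((∀ k, g j x ≤ g k x) ∧ ∀ k < j, ¬ (∀ l, g k x ≤ g l x)) := by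
  constructor
  · rintro rfl
    refine ⟨jmin_spec g x, fun k hk hkmin => ?_⟩
    have : jmin g x ≤ k := Finset.min'_le _ _
      (Finset.mem_filter.mpr ⟨Finset.mem_univ _, hkmin⟩)
    exact absurd hk (not_lt.mpr this)
  · rintro ⟨hj, hlt⟩
    have h1 : jmin g x ≤ j := Finset.min'_le _ _
      (Finset.mem_filter.mpr ⟨Finset.mem_univ _, hj⟩)
    rcases lt_or_eq_of_le h1 with h | h
    · exact absurd (jmin_spec g x) (hlt _ h)
    · exact h

lemma measurableSet_jmin_fiber {g : Fin n → E → ℝ} (hg : ∀ j, Measurable (g j)) (j : Fin n) :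
    MeasurableSet (jmin g ⁻¹' {j}) := by
  have : jmin g ⁻¹' {j} = (⋂ k, {x | g j x ≤ g k x}) ∩
      ⋂ k, ⋂ (_ : k < j), (⋂ l, {x | g k x ≤ g l x})ᶜ := by
    ext x
    simp only [mem_preimage, mem_singleton_iff, jmin_eq_iff, mem_inter_iff, mem_iInter,
      mem_setOf_eq, mem_compl_iff]
  rw [this]
  exact ((MeasurableSet.iInter fun k => measurableSet_le (hg j) (hg k))).inter
    (MeasurableSet.iInter fun k => MeasurableSet.iInter fun _ =>
      (MeasurableSet.iInter fun l => measurableSet_le (hg k) (hg l)).compl)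

omit [MeasurableSpace E] in
lemma sum_indicator_jmin (g : Fin n → E → ℝ) (F : Fin n → E → ℝ) (x : E) :
    ∑ j, (jmin g ⁻¹' {j}).indicator (F j) x = F (jmin g x) x := by
  rw [Finset.sum_eq_single (jmin g x)]
  · rw [indicator_of_mem (by simp) (F (jmin g x))]
  · intro j _ hj
    exact indicator_of_notMem (by simp [Ne.symm hj]) _
  · simp

omit [MeasurableSpace E] in
lemma iInf_eq_jmin (g : Fin n → E → ℝ) (x : E) : (⨅ j, g j x) = g (jmin g x) x :=
  le_antisymm (ciInf_le (Set.Finite.bddBelow (Set.finite_range _)) _)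
    (le_ciInf (jmin_spec g x))

end Part

/-- If `N_1, …, N_n, M_1, …, M_n` (encoded as the family
`W : Fin n ⊕ Fin n → Ω → ℝ`, with `N_j = W (inl j)` and `M_j = W (inr j)`) are i.i.d.
`χ²_n` random variables independent of `(U, V)`, then
`(1/n) E[min_j (N_j u_j^⊤ Q u_j + M_j v_j^⊤ R v_j)] ≤ E[μ] ≤ trace S / n`. -/
theorem statement5 {Ω : Type*} [MeasurableSpace Ω] (P : Measure Ω) [IsProbabilityMeasure P]
    (n : ℕ) (hn : 1 ≤ n) (Q R : Matrix (Fin n) (Fin n) ℝ)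
    (hQ : Q.PosSemidef) (hR : R.PosSemidef)
    (S : Matrix (Fin n ⊕ Fin n) (Fin n ⊕ Fin n) ℝ) (hSdef : S = Matrix.fromBlocks Q 0 0 R)
    (U V : Ω → Matrix (Fin n) (Fin n) ℝ)
    (hU : IsHaarOrthogonal P U) (hV : IsHaarOrthogonal P V)
    (hUV : IndepFun U V P)
    (W : Fin n ⊕ Fin n → Ω → ℝ) (hWm : ∀ i, Measurable (W i))
    (hWiid : iIndepFun W P)
    (hWchi : ∀ i, Measure.map (W i) P = gammaMeasure ((n : ℝ) / 2) (1 / 2))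
    (hWUV : IndepFun (fun ω => (U ω, V ω)) (fun ω i => W i ω) P) :
    (1 / (n : ℝ)) *
        ∫ ω, (⨅ j : Fin n,
          (W (Sum.inl j) ω * ((fun i => U ω i j) ⬝ᵥ Q.mulVec fun i => U ω i j) +
            W (Sum.inr j) ω * ((fun i => V ω i j) ⬝ᵥ R.mulVec fun i => V ω i j))) ∂P ≤
      (∫ ω, colMin Q R (U ω) (V ω) ∂P) ∧
    (∫ ω, colMin Q R (U ω) (V ω) ∂P) ≤ S.trace / n := by
  haveI : NeZero n := ⟨Nat.one_le_iff_ne_zero.mp hn⟩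
  have hnpos : (0:ℝ) < n := by exact_mod_cast hn
  set E := Matrix (Fin n) (Fin n) ℝ × Matrix (Fin n) (Fin n) ℝ with hE
  set q : Fin n → E → ℝ :=
    fun j p => ((fun i => p.1 i j) ⬝ᵥ Q.mulVec fun i => p.1 i j) with hq_def
  set s : Fin n → E → ℝ :=
    fun j p => ((fun i => p.2 i j) ⬝ᵥ R.mulVec fun i => p.2 i j) with hs_def
  set g : Fin n → E → ℝ := fun j p => q j p + s j p with hg_def
  have hqm : ∀ j, Measurable (q j) := fun j => (measurable_colQuad Q j).comp measurable_fst
  have hsm : ∀ j, Measurable (s j) := fun j => (measurable_colQuad R j).comp measurable_snd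
  have hgm : ∀ j, Measurable (g j) := fun j => (hqm j).add (hsm j)
  set Z : Ω → E := fun ω => (U ω, V ω) with hZ_def
  have hZ : Measurable Z := hU.1.prodMk hV.1
  have hq0 : ∀ j p, 0 ≤ q j p := fun j p => colQuad_nonneg hQ p.1 j
  have hs0 : ∀ j p, 0 ≤ s j p := fun j p => colQuad_nonneg hR p.2 j
  have hcolMin : ∀ ω, colMin Q R (U ω) (V ω) = ⨅ j, g j (Z ω) := fun ω => rfl
  have hbdd : ∀ (f : Fin n → ℝ), BddBelow (Set.range f) :=
    fun f => Set.Finite.bddBelow (Set.finite_range f)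
  -- trace of S
  have hStr : S.trace = Q.trace + R.trace := by
    simp [hSdef, Matrix.trace, Matrix.diag, Fintype.sum_sum_type]
  have hStr0 : 0 ≤ S.trace := by
    rw [hStr]; exact add_nonneg (trace_nonneg_of_psd hQ) (trace_nonneg_of_psd hR)
  -- sum over columns for orthogonal matrices
  have hsumg : ∀ p : E, p.1 ∈ Matrix.orthogonalGroup (Fin n) ℝ →
      p.2 ∈ Matrix.orthogonalGroup (Fin n) ℝ → ∑ j, g j p = S.trace := by
    intro p h1 h2
    rw [hStr, hg_def]
    simp only
    rw [Finset.sum_add_distrib, sum_colQuad Q p.1 h1, sum_colQuad R p.2 h2]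
  -- nonnegativity of colMin
  have hcol0 : ∀ ω, 0 ≤ colMin Q R (U ω) (V ω) := by
    intro ω
    rw [hcolMin]
    exact le_ciInf fun j => add_nonneg (hq0 j _) (hs0 j _)
  ---------------------------------------------------------------------------
  -- Upper bound
  ---------------------------------------------------------------------------
  have hupper : (∫ ω, colMin Q R (U ω) (V ω) ∂P) ≤ S.trace / n := by
    have hub : ∀ᵐ ω ∂P, colMin Q R (U ω) (V ω) ≤ S.trace / n := by
      filter_upwards [hU.2.1, hV.2.1] with ω hUo hVo
      rw [hcolMin]
      rw [le_div_iff₀ hnpos]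
      have hle : ∀ j : Fin n, (⨅ k, g k (Z ω)) ≤ g j (Z ω) := fun j => ciInf_le (hbdd _) j
      calc (⨅ k, g k (Z ω)) * n = ∑ _j : Fin n, (⨅ k, g k (Z ω)) := by
            simp [Finset.sum_const, mul_comm]
        _ ≤ ∑ j, g j (Z ω) := Finset.sum_le_sum fun j _ => hle j
        _ = S.trace := hsumg (Z ω) hUo hVo
    have := integral_mono_of_nonneg (ae_of_all _ hcol0) (integrable_const (S.trace / n)) hub
    simpa using this
  refine ⟨?_, hupper⟩
  ---------------------------------------------------------------------------
  -- Lower bound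
  ---------------------------------------------------------------------------
  -- gamma facts
  have hhalf : (0:ℝ) < (n:ℝ)/2 := by linarith
  have hWint : ∀ i, Integrable (W i) P := by
    intro i
    have h := gamma_integrable_id hhalf (by norm_num : (0:ℝ) < 1/2)
    rw [← hWchi i] at h
    exact (integrable_map_measure aestronglyMeasurable_id (hWm i).aemeasurable).mp h
  have hWmean : ∀ i, ∫ ω, W i ω ∂P = n := by
    intro i
    have h : ∫ x, x ∂(Measure.map (W i) P) = ((n:ℝ)/2) / (1/2) := by
      rw [hWchi i]; exact gamma_integral_id hhalf (by norm_num)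
    have h2 : ∫ x, x ∂(Measure.map (W i) P) = ∫ ω, W i ω ∂P :=
      integral_map (hWm i).aemeasurable aestronglyMeasurable_id
    rw [h2] at h
    rw [h]; ring
  have hWnn : ∀ᵐ ω ∂P, ∀ i, 0 ≤ W i ω := by
    rw [ae_all_iff]
    intro i
    have h1 : P {ω | W i ω < 0} = 0 := by
      have : {ω | W i ω < 0} = W i ⁻¹' (Set.Iio 0) := rfl
      rw [this, ← Measure.map_apply (hWm i) measurableSet_Iio, hWchi i, gamma_Iio_zero]
    rw [ae_iff]
    convert h1 using 2
    ext ω; simp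
  -- the partition sets and indicator functions
  set A : Fin n → Set E := fun j => jmin g ⁻¹' {j} with hA_def
  have hAm : ∀ j, MeasurableSet (A j) := measurableSet_jmin_fiber hgm
  set α : Fin n → E → ℝ := fun j => (A j).indicator (q j) with hα_def
  set β : Fin n → E → ℝ := fun j => (A j).indicator (s j) with hβ_def
  have hαm : ∀ j, Measurable (α j) := fun j => (hqm j).indicator (hAm j)
  have hβm : ∀ j, Measurable (β j) := fun j => (hsm j).indicator (hAm j)
  have hα0 : ∀ j p, 0 ≤ α j p := fun j p => Set.indicator_nonneg (fun x _ => hq0 j x) p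
  have hβ0 : ∀ j p, 0 ≤ β j p := fun j p => Set.indicator_nonneg (fun x _ => hs0 j x) p
  -- bounds when orthogonal
  have hαbd : ∀ j p, p.1 ∈ Matrix.orthogonalGroup (Fin n) ℝ → α j p ≤ Q.trace := by
    intro j p hp
    have h1 : q j p ≤ Q.trace := by
      rw [← sum_colQuad Q p.1 hp]
      exact Finset.single_le_sum (fun k _ => colQuad_nonneg hQ p.1 k) (Finset.mem_univ j)
    calc α j p ≤ q j p := Set.indicator_le_self' (fun x _ => hq0 j x) p
      _ ≤ Q.trace := h1
  have hβbd : ∀ j p, p.2 ∈ Matrix.orthogonalGroup (Fin n) ℝ → β j p ≤ R.trace := by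
    intro j p hp
    have h1 : s j p ≤ R.trace := by
      rw [← sum_colQuad R p.2 hp]
      exact Finset.single_le_sum (fun k _ => colQuad_nonneg hR p.2 k) (Finset.mem_univ j)
    calc β j p ≤ s j p := Set.indicator_le_self' (fun x _ => hs0 j x) p
      _ ≤ R.trace := h1
  -- integrability of α j ∘ Z, β j ∘ Z
  have hαint : ∀ j, Integrable (fun ω => α j (Z ω)) P := by
    intro j
    refine Integrable.mono' (integrable_const Q.trace)
      ((hαm j).comp hZ).aestronglyMeasurable ?_
    filter_upwards [hU.2.1] with ω hUo
    rw [Real.norm_eq_abs, abs_of_nonneg (hα0 j _)]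
    exact hαbd j (Z ω) hUo
  have hβint : ∀ j, Integrable (fun ω => β j (Z ω)) P := by
    intro j
    refine Integrable.mono' (integrable_const R.trace)
      ((hβm j).comp hZ).aestronglyMeasurable ?_
    filter_upwards [hV.2.1] with ω hVo
    rw [Real.norm_eq_abs, abs_of_nonneg (hβ0 j _)]
    exact hβbd j (Z ω) hVo
  -- independence of indicator functions and W's
  have hIndα : ∀ j, IndepFun (fun ω => α j (Z ω)) (fun ω => W (Sum.inl j) ω) P :=
    fun j => hWUV.comp (hαm j) (measurable_pi_apply (Sum.inl j))
  have hIndβ : ∀ j, IndepFun (fun ω => β j (Z ω)) (fun ω => W (Sum.inr j) ω) P :=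
    fun j => hWUV.comp (hβm j) (measurable_pi_apply (Sum.inr j))
  have hprodαint : ∀ j, Integrable (fun ω => α j (Z ω) * W (Sum.inl j) ω) P :=
    fun j => (hIndα j).integrable_mul (hαint j) (hWint _)
  have hprodβint : ∀ j, Integrable (fun ω => β j (Z ω) * W (Sum.inr j) ω) P :=
    fun j => (hIndβ j).integrable_mul (hβint j) (hWint _)
  have hprodα : ∀ j, ∫ ω, α j (Z ω) * W (Sum.inl j) ω ∂P
      = (∫ ω, α j (Z ω) ∂P) * n := by
    intro j
    have h2 := (hIndα j).integral_mul_eq_mul_integral (hαint j).1 (hWint (Sum.inl j)).1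
    have h3 : (fun ω => α j (Z ω) * W (Sum.inl j) ω)
        = (fun ω => α j (Z ω)) * fun ω => W (Sum.inl j) ω := rfl
    rw [h3, h2, hWmean]
  have hprodβ : ∀ j, ∫ ω, β j (Z ω) * W (Sum.inr j) ω ∂P
      = (∫ ω, β j (Z ω) ∂P) * n := by
    intro j
    have h2 := (hIndβ j).integral_mul_eq_mul_integral (hβint j).1 (hWint (Sum.inr j)).1
    have h3 : (fun ω => β j (Z ω) * W (Sum.inr j) ω)
        = (fun ω => β j (Z ω)) * fun ω => W (Sum.inr j) ω := rfl
    rw [h3, h2, hWmean]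
  -- the comparison function
  set G : Ω → ℝ := fun ω => ∑ j, (α j (Z ω) * W (Sum.inl j) ω + β j (Z ω) * W (Sum.inr j) ω)
    with hG_def
  have hGint : Integrable G P :=
    integrable_finset_sum _ fun j _ => (hprodαint j).add (hprodβint j)
  set X : Ω → ℝ := fun ω => ⨅ j : Fin n,
      (W (Sum.inl j) ω * q j (Z ω) + W (Sum.inr j) ω * s j (Z ω)) with hX_def
  -- pointwise: X ≤ G
  have hXG : ∀ ω, X ω ≤ G ω := by
    intro ω
    set j0 := jmin g (Z ω) with hj0
    have hGω : G ω = α j0 (Z ω) * W (Sum.inl j0) ω + β j0 (Z ω) * W (Sum.inr j0) ω := by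
      rw [hG_def]
      refine Finset.sum_eq_single j0 ?_ (by simp)
      intro j _ hj
      have hZA : Z ω ∉ A j := by
        simp only [hA_def, Set.mem_preimage, Set.mem_singleton_iff, ← hj0]
        exact fun h => hj h.symm
      rw [hα_def, hβ_def]
      simp only [Set.indicator_of_notMem hZA]
      ring
    have hmem : Z ω ∈ A j0 := by simp [hA_def, hj0]
    have e1 : α j0 (Z ω) = q j0 (Z ω) := Set.indicator_of_mem hmem _
    have e2 : β j0 (Z ω) = s j0 (Z ω) := Set.indicator_of_mem hmem _
    rw [hGω, e1, e2]
    calc X ω ≤ W (Sum.inl j0) ω * q j0 (Z ω) + W (Sum.inr j0) ω * s j0 (Z ω) :=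
        ciInf_le (hbdd _) j0
      _ = q j0 (Z ω) * W (Sum.inl j0) ω + s j0 (Z ω) * W (Sum.inr j0) ω := by ring
  -- a.e. nonnegativity of X
  have hX0 : ∀ᵐ ω ∂P, 0 ≤ X ω := by
    filter_upwards [hWnn] with ω hw
    exact le_ciInf fun j => add_nonneg (mul_nonneg (hw _) (hq0 j _))
      (mul_nonneg (hw _) (hs0 j _))
  -- the key inequality ∫ X ≤ n * ∫ colMin
  have hsum_ind : ∀ ω, ∑ j, (α j (Z ω) + β j (Z ω)) = colMin Q R (U ω) (V ω) := by
    intro ω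
    have h1 : ∀ j, α j (Z ω) + β j (Z ω) = (A j).indicator (g j) (Z ω) := by
      intro j
      rw [hα_def, hβ_def]
      by_cases h : Z ω ∈ A j
      · simp [Set.indicator_of_mem h, hg_def]
      · simp [Set.indicator_of_notMem h]
    simp_rw [h1]
    rw [hcolMin, iInf_eq_jmin g (Z ω)]
    exact sum_indicator_jmin g g (Z ω)
  have hcolint : Integrable (fun ω => colMin Q R (U ω) (V ω)) P := by
    have : (fun ω => colMin Q R (U ω) (V ω)) = fun ω => ∑ j, (α j (Z ω) + β j (Z ω)) := by
      funext ω; rw [hsum_ind ω]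
    rw [this]
    exact integrable_finset_sum _ fun j _ => (hαint j).add (hβint j)
  have hGeq : ∫ ω, G ω ∂P = n * ∫ ω, colMin Q R (U ω) (V ω) ∂P := by
    have h0 : ∫ ω, G ω ∂P
        = ∑ j, ∫ ω, (α j (Z ω) * W (Sum.inl j) ω + β j (Z ω) * W (Sum.inr j) ω) ∂P :=
      integral_finset_sum _ fun j _ => (hprodαint j).add (hprodβint j)
    have h2' : ∫ ω, (∑ j, (α j (Z ω) + β j (Z ω))) ∂P
        = ∑ j, ∫ ω, (α j (Z ω) + β j (Z ω)) ∂P :=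
      integral_finset_sum _ fun j _ => (hαint j).add (hβint j)
    have h2 : ∫ ω, colMin Q R (U ω) (V ω) ∂P = ∑ j, ∫ ω, (α j (Z ω) + β j (Z ω)) ∂P := by
      rw [← h2']
      exact integral_congr_ae (ae_of_all _ fun ω => (hsum_ind ω).symm)
    rw [h0, h2, Finset.mul_sum]
    refine Finset.sum_congr rfl fun j _ => ?_
    rw [integral_add (hprodαint j) (hprodβint j), hprodα j, hprodβ j,
      integral_add (hαint j) (hβint j)]
    ring
  have hkey : ∫ ω, X ω ∂P ≤ n * ∫ ω, colMin Q R (U ω) (V ω) ∂P := by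
    rw [← hGeq]
    exact integral_mono_of_nonneg hX0 hGint (ae_of_all _ hXG)
  have hgoal : (1 / (n:ℝ)) * ∫ ω, X ω ∂P ≤ ∫ ω, colMin Q R (U ω) (V ω) ∂P := by
    rw [div_mul_eq_mul_div, one_mul, div_le_iff₀ hnpos, mul_comm]
    exact hkey
  exact hgoal

end
end

section
/- Let n ≥ 1 and r ≥ 1, let s_1, …, s_r be positive reals, and let ζ_1, …, ζ_n be real random variables on a common probability space, not necessarily independent, such that each ζ_j has the same distribution as Σ_{l=1}^r s_l·X_l² where X_1, …, X_r are i.i.d. standard real Gaussians. Then E[ min_{1≤j≤n} ζ_j ] ≥ T·(1 − 2·(σ/T)·√(log n)), where T := Σ_{l=1}^r s_l and σ := (Σ_{l=1}^r s_l²)^{1/2}. -/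
open MeasureTheory ProbabilityTheory

/-- The law of `Σ_l s_l X_l²` where `X_1, …, X_r` are i.i.d. standard real Gaussians. -/
noncomputable def chiSqCombo (r : ℕ) (s : Fin r → ℝ) : Measure ℝ :=
  Measure.map (fun x : Fin r → ℝ => ∑ l, s l * x l ^ 2)
    (Measure.pi fun _ : Fin r => gaussianReal 0 1)

section Aux

open Real
open scoped ENNReal NNReal

-- log inequality
lemma log_ineq {x : ℝ} (hx : 0 ≤ x) : x - x^2/2 ≤ Real.log (1+x) := by
  have h1 : ∀ y ∈ Set.Ici (0:ℝ), HasDerivAt (fun t => Real.log (1+t) - t + t^2/2)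
      ((1+y)⁻¹ - 1 + y) y := by
    intro y hy
    simp only [Set.mem_Ici] at hy
    have h1y : (1:ℝ) + y ≠ 0 := by positivity
    have hlog : HasDerivAt (fun t : ℝ => Real.log (1+t)) ((1+y)⁻¹) y := by
      have := (Real.hasDerivAt_log h1y).comp y ((hasDerivAt_id y).const_add 1)
      simpa [Function.comp_def] using this
    have hsq : HasDerivAt (fun t : ℝ => t^2/2) y y := by
      have := (hasDerivAt_pow 2 y).div_const 2
      simpa using this
    exact (hlog.sub (hasDerivAt_id y)).add hsq
  have hmono : MonotoneOn (fun t => Real.log (1+t) - t + t^2/2) (Set.Ici (0:ℝ)) := by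
    apply monotoneOn_of_deriv_nonneg (convex_Ici 0)
    · exact ContinuousOn.add (ContinuousOn.sub (Real.continuousOn_log.comp
        (continuous_const.add continuous_id).continuousOn
        (fun y hy => by simp only [Set.mem_Ici] at hy; intro h; simp at h; nlinarith))
        continuousOn_id) ((continuous_pow 2).continuousOn.div_const 2)
    · intro y hy
      rw [interior_Ici] at hy
      exact (h1 y (le_of_lt (Set.mem_Ioi.mp hy))).differentiableAt.differentiableWithinAt
    · intro y hy
      rw [interior_Ici] at hy
      simp only [Set.mem_Ioi] at hy
      rw [HasDerivAt.deriv (h1 y (le_of_lt hy))]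
      have : (1+y)⁻¹ - 1 + y = y^2/(1+y) := by field_simp; ring
      rw [this]; positivity
  have := hmono (Set.self_mem_Ici) (Set.mem_Ici.mpr hx) hx
  simp only [add_zero, Real.log_one] at this
  nlinarith [this]

-- the key factor inequality
lemma factor_le {c : ℝ} (hc : 0 ≤ c) : Real.exp c / Real.sqrt (1+2*c) ≤ Real.exp (c^2) := by
  have h1 : (0:ℝ) < 1 + 2*c := by linarith
  have hsq : Real.exp (c - c^2) ≤ Real.sqrt (1+2*c) := by
    rw [show Real.sqrt (1+2*c) = Real.sqrt (1+2*c) from rfl]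
    rw [Real.le_sqrt (Real.exp_nonneg _) (by positivity)]
    have : Real.exp (c - c^2) ^ 2 = Real.exp (2*c - (2*c)^2/2) := by
      rw [← Real.exp_nat_mul]; ring_nf
    rw [this]
    calc Real.exp (2*c - (2*c)^2/2) ≤ Real.exp (Real.log (1+2*c)) :=
          Real.exp_le_exp.mpr (log_ineq (by positivity))
      _ = 1 + 2*c := Real.exp_log h1
  rw [div_le_iff₀ (Real.sqrt_pos.mpr h1)]
  calc Real.exp c = Real.exp (c^2) * Real.exp (c - c^2) := by
        rw [← Real.exp_add]; ring_nf
    _ ≤ Real.exp (c^2) * Real.sqrt (1+2*c) := by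
        exact mul_le_mul_of_nonneg_left hsq (Real.exp_nonneg _)


lemma gauss_int (f : ℝ → ℝ) :
    ∫ x, f x ∂(gaussianReal 0 1) = ∫ x, gaussianPDFReal 0 1 x * f x := by
  rw [gaussianReal_of_var_ne_zero 0 one_ne_zero, gaussianPDF_def]
  have h : (fun x => ENNReal.ofReal (gaussianPDFReal 0 1 x))
      = fun x => (((gaussianPDFReal 0 1 x).toNNReal : ℝ≥0) : ℝ≥0∞) := rfl
  rw [h, integral_withDensity_eq_integral_smul
    ((measurable_gaussianPDFReal 0 1).real_toNNReal) f]
  congr 1; ext x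
  rw [NNReal.smul_def, smul_eq_mul, Real.coe_toNNReal _ (gaussianPDFReal_nonneg 0 1 x)]

lemma gauss_pdf_eq (x : ℝ) :
    gaussianPDFReal 0 1 x = (Real.sqrt (2*π))⁻¹ * Real.exp (-(1/2) * x^2) := by
  simp [gaussianPDFReal]
  ring_nf
  simp

lemma gauss_exp_integral {c : ℝ} (hc : 0 ≤ c) :
    ∫ x, Real.exp (c * (1 - x^2)) ∂(gaussianReal 0 1)
      = Real.exp c / Real.sqrt (1 + 2*c) := by
  rw [gauss_int _]
  have heq : ∀ x : ℝ, gaussianPDFReal 0 1 x * Real.exp (c * (1 - x^2))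
      = ((Real.sqrt (2*π))⁻¹ * Real.exp c) * Real.exp (-(c + 1/2) * x^2) := by
    intro x
    rw [gauss_pdf_eq]
    have h : -(1/2)*x^2 + c*(1-x^2) = c + (-(c+1/2)*x^2) := by ring
    rw [mul_assoc, ← Real.exp_add, h, Real.exp_add, ← mul_assoc]
  simp_rw [heq]
  rw [integral_const_mul, integral_gaussian]
  have hpos : (0:ℝ) < c + 1/2 := by linarith
  have h1 : Real.sqrt (π / (c+1/2)) = Real.sqrt π / Real.sqrt (c+1/2) :=
    Real.sqrt_div pi_pos.le _
  have h2 : Real.sqrt (2*π) = Real.sqrt 2 * Real.sqrt π :=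
    Real.sqrt_mul (by norm_num) _
  have h3 : Real.sqrt 2 * Real.sqrt (c+1/2) = Real.sqrt (1+2*c) := by
    rw [← Real.sqrt_mul (by norm_num)]
    congr 1; ring
  have hπ : Real.sqrt π ≠ 0 := by positivity
  have hc2 : Real.sqrt (c+1/2) ≠ 0 := by positivity
  have h12 : Real.sqrt (1+2*c) ≠ 0 := by positivity
  rw [h1, h2, ← h3]
  field_simp

lemma gauss_exp_integrable {c : ℝ} (hc : 0 ≤ c) :
    Integrable (fun x => Real.exp (c * (1 - x^2))) (gaussianReal 0 1) := by
  refine Integrable.mono' (integrable_const (Real.exp c)) ?_ ?_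
  · exact (Real.continuous_exp.comp (by continuity)).aestronglyMeasurable
  · filter_upwards with x
    rw [Real.norm_eq_abs, abs_of_nonneg (Real.exp_nonneg _), Real.exp_le_exp]
    nlinarith [sq_nonneg x]

lemma gauss_sq_integrable : Integrable (fun x : ℝ => x^2) (gaussianReal 0 1) := by
  rw [gaussianReal_of_var_ne_zero 0 one_ne_zero, gaussianPDF_def]
  have h : (fun x => ENNReal.ofReal (gaussianPDFReal 0 1 x))
      = fun x => (((gaussianPDFReal 0 1 x).toNNReal : ℝ≥0) : ℝ≥0∞) := rfl
  rw [h, integrable_withDensity_iff_integrable_smul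
    ((measurable_gaussianPDFReal 0 1).real_toNNReal)]
  refine (((integrable_rpow_mul_exp_neg_mul_sq (b := 1/2) (by norm_num)
    (s := 2) (by norm_num))).const_mul ((Real.sqrt (2*π))⁻¹)).congr ?_
  filter_upwards with x
  rw [NNReal.smul_def, Real.coe_toNNReal _ (gaussianPDFReal_nonneg 0 1 x), smul_eq_mul,
    gauss_pdf_eq]
  have habs : x ^ (2:ℝ) = x ^ 2 := by
    rw [show (2:ℝ) = ((2:ℕ):ℝ) by norm_num, Real.rpow_natCast]
  rw [habs]
  ring


noncomputable local instance gms : MeasureSpace ℝ := ⟨gaussianReal 0 1⟩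

local instance : IsProbabilityMeasure (volume : Measure ℝ) := by
  show IsProbabilityMeasure (gaussianReal 0 1); infer_instance

local instance : SigmaFinite (volume : Measure ℝ) := by
  show SigmaFinite (gaussianReal 0 1); infer_instance

variable {r : ℕ} {s : Fin r → ℝ}

lemma measurable_gfun : Measurable (fun x : Fin r → ℝ => ∑ l, s l * x l ^ 2) :=
  Finset.measurable_sum _ (fun l _ => by fun_prop)

lemma g_integrable (hs : ∀ l, 0 < s l) :
    Integrable (fun x : Fin r → ℝ => ∑ l, s l * x l ^ 2)
      (Measure.pi fun _ : Fin r => gaussianReal 0 1) := by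
  apply integrable_finset_sum
  intro l _
  have h : Integrable (fun x : Fin r → ℝ => ∏ i, (if i = l then s l * (x i) ^ 2 else 1))
      (volume : Measure (Fin r → ℝ)) := by
    refine Integrable.fintype_prod (𝕜 := ℝ)
      (f := fun (i : Fin r) (y : ℝ) => if i = l then s l * y ^ 2 else 1) (fun i => ?_)
    by_cases hi : i = l
    · simp only [hi, if_true]
      exact gauss_sq_integrable.const_mul (s l)
    · simp only [hi, if_false]
      exact integrable_const (1 : ℝ)
  have heq : (fun x : Fin r → ℝ => ∏ i, (if i = l then s l * (x i) ^ 2 else 1))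
      = fun x : Fin r → ℝ => s l * x l ^ 2 := by
    funext x
    rw [Finset.prod_ite_eq' Finset.univ l (fun i => s l * x i ^ 2)]
    simp
  rw [heq] at h
  exact h

lemma exp_term_eq (lam : ℝ) (x : Fin r → ℝ) :
    Real.exp (lam * ((∑ l, s l) - ∑ l, s l * x l ^ 2))
      = ∏ l, Real.exp (lam * s l * (1 - x l ^ 2)) := by
  rw [← Real.exp_sum]
  congr 1
  rw [← Finset.sum_sub_distrib, Finset.mul_sum]
  exact Finset.sum_congr rfl (fun l _ => by ring)

lemma exp_integrable {lam : ℝ} (hlam : 0 ≤ lam) (hs : ∀ l, 0 < s l) :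
    Integrable (fun x : Fin r → ℝ => Real.exp (lam * ((∑ l, s l) - ∑ l, s l * x l ^ 2)))
      (Measure.pi fun _ : Fin r => gaussianReal 0 1) := by
  simp only [exp_term_eq]
  exact Integrable.fintype_prod (𝕜 := ℝ)
    (f := fun l y => Real.exp (lam * s l * (1 - y ^ 2)))
    (fun l => gauss_exp_integrable (mul_nonneg hlam (hs l).le))

lemma exp_integral_le {lam : ℝ} (hlam : 0 ≤ lam) (hs : ∀ l, 0 < s l) :
    ∫ x : Fin r → ℝ, Real.exp (lam * ((∑ l, s l) - ∑ l, s l * x l ^ 2))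
        ∂(Measure.pi fun _ : Fin r => gaussianReal 0 1)
      ≤ Real.exp (lam ^ 2 * ∑ l, s l ^ 2) := by
  simp only [exp_term_eq]
  have h := integral_fintype_prod_eq_prod (𝕜 := ℝ) (ι := Fin r)
    (fun l (y : ℝ) => Real.exp (lam * s l * (1 - y ^ 2))) (μ := fun _ => gaussianReal 0 1)
  rw [h]
  have hle : ∀ l : Fin r, (∫ y : ℝ, Real.exp (lam * s l * (1 - y ^ 2)) ∂(gaussianReal 0 1))
      ≤ Real.exp ((lam * s l) ^ 2) := by
    intro l
    rw [show (∫ y : ℝ, Real.exp (lam * s l * (1 - y ^ 2)) ∂(gaussianReal 0 1))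
        = ∫ y : ℝ, Real.exp (lam * s l * (1 - y ^ 2)) from rfl]
    rw [show (∫ y : ℝ, Real.exp (lam * s l * (1 - y ^ 2)))
        = ∫ y : ℝ, Real.exp (lam * s l * (1 - y ^ 2)) ∂(gaussianReal 0 1) from rfl,
      gauss_exp_integral (mul_nonneg hlam (hs l).le)]
    exact factor_le (mul_nonneg hlam (hs l).le)
  calc (∏ l, ∫ y : ℝ, Real.exp (lam * s l * (1 - y ^ 2)))
      ≤ ∏ l, Real.exp ((lam * s l) ^ 2) := by
        apply Finset.prod_le_prod
        · intro l _
          rw [show (∫ y : ℝ, Real.exp (lam * s l * (1 - y ^ 2)))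
              = ∫ y : ℝ, Real.exp (lam * s l * (1 - y ^ 2)) ∂(gaussianReal 0 1) from rfl,
            gauss_exp_integral (mul_nonneg hlam (hs l).le)]
          positivity
        · exact fun l _ => hle l
    _ = Real.exp (lam ^ 2 * ∑ l, s l ^ 2) := by
        rw [← Real.exp_sum]
        congr 1
        rw [Finset.mul_sum]
        exact Finset.sum_congr rfl (fun l _ => by ring)

end Aux

/-- If each `ζ_j` (not necessarily independent) is distributed as
`Σ_l s_l X_l²` with `X_l` i.i.d. standard Gaussians, then
`E[min_j ζ_j] ≥ T (1 − 2 (σ/T) √(log n))` where `T = Σ_l s_l` and `σ = (Σ_l s_l²)^{1/2}`. -/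
theorem statement9 {Ω : Type*} [MeasurableSpace Ω] (P : Measure Ω) [IsProbabilityMeasure P]
    (n r : ℕ) (hn : 1 ≤ n) (hr : 1 ≤ r) (s : Fin r → ℝ) (hs : ∀ l, 0 < s l)
    (ζ : Fin n → Ω → ℝ) (hζm : ∀ j, Measurable (ζ j))
    (hζd : ∀ j, Measure.map (ζ j) P = chiSqCombo r s) :
    (∑ l, s l) *
        (1 - 2 * (Real.sqrt (∑ l, s l ^ 2) / ∑ l, s l) * Real.sqrt (Real.log n)) ≤
      ∫ ω, (⨅ j, ζ j ω) ∂P := by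
  classical
  have hrn : Nonempty (Fin r) := Fin.pos_iff_nonempty.mp hr
  have hnn : Nonempty (Fin n) := Fin.pos_iff_nonempty.mp hn
  set T : ℝ := ∑ l, s l with hTdef
  set σ2 : ℝ := ∑ l, s l ^ 2 with hσ2def
  have hT : 0 < T := Finset.sum_pos (fun l _ => hs l) Finset.univ_nonempty
  have hσ2 : 0 < σ2 := Finset.sum_pos (fun l _ => pow_pos (hs l) 2) Finset.univ_nonempty
  have hgm : Measurable (fun x : Fin r → ℝ => ∑ l, s l * x l ^ 2) := measurable_gfun
  -- integrability of each ζ j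
  have hζint : ∀ j, Integrable (ζ j) P := by
    intro j
    have h1 : Integrable (id : ℝ → ℝ) (chiSqCombo r s) := by
      rw [chiSqCombo, integrable_map_measure aestronglyMeasurable_id hgm.aemeasurable]
      exact g_integrable hs
    have h2 : Integrable (id : ℝ → ℝ) (Measure.map (ζ j) P) := by
      rw [hζd j]; exact h1
    exact (integrable_map_measure aestronglyMeasurable_id (hζm j).aemeasurable).mp h2
  -- MGF transfer
  have htrans : ∀ (lam : ℝ), 0 ≤ lam → ∀ j,
      Integrable (fun ω => Real.exp (lam * (T - ζ j ω))) P ∧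
      ∫ ω, Real.exp (lam * (T - ζ j ω)) ∂P ≤ Real.exp (lam ^ 2 * σ2) := by
    intro lam hlam j
    have hF : Measurable (fun x : ℝ => Real.exp (lam * (T - x))) :=
      Real.measurable_exp.comp (measurable_const.mul (measurable_const.sub measurable_id))
    have hint : Integrable (fun x : ℝ => Real.exp (lam * (T - x))) (chiSqCombo r s) := by
      rw [chiSqCombo, integrable_map_measure hF.aestronglyMeasurable hgm.aemeasurable]
      exact exp_integrable hlam hs
    constructor
    · have h2 : Integrable (fun x : ℝ => Real.exp (lam * (T - x))) (Measure.map (ζ j) P) := by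
        rw [hζd j]; exact hint
      exact (integrable_map_measure hF.aestronglyMeasurable (hζm j).aemeasurable).mp h2
    · have h3 : ∫ ω, Real.exp (lam * (T - ζ j ω)) ∂P
          = ∫ x, Real.exp (lam * (T - x)) ∂(chiSqCombo r s) := by
        rw [← hζd j, integral_map (hζm j).aemeasurable hF.aestronglyMeasurable]
      rw [h3, chiSqCombo, integral_map hgm.aemeasurable hF.aestronglyMeasurable]
      exact exp_integral_le hlam hs
  -- the min
  set m : Ω → ℝ := fun ω => ⨅ j, ζ j ω with hmdef
  have hmm : Measurable m := Measurable.iInf (fun j => hζm j)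
  have hmem : ∀ ω, ∃ j, m ω = ζ j ω := by
    intro ω
    obtain ⟨j, hj⟩ := exists_eq_ciInf_of_finite (f := fun j => ζ j ω)
    exact ⟨j, hj.symm⟩
  have hmint : Integrable m P := by
    refine Integrable.mono' (integrable_finset_sum Finset.univ (fun j _ => (hζint j).abs))
      hmm.aestronglyMeasurable ?_
    filter_upwards with ω
    obtain ⟨j, hj⟩ := hmem ω
    rw [Real.norm_eq_abs, hj]
    exact Finset.single_le_sum (f := fun j => |ζ j ω|) (fun j _ => abs_nonneg _)
      (Finset.mem_univ j)
  set I : ℝ := ∫ ω, m ω ∂P with hIdef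
  -- key estimate
  have key : ∀ lam : ℝ, 0 < lam → lam * (T - I) ≤ Real.log n + lam ^ 2 * σ2 := by
    intro lam hlam
    set a : ℝ := lam * (T - I) with hadef
    have htangent : ∀ ω, Real.exp a * (1 + (lam * (T - m ω) - a))
        ≤ Real.exp (lam * (T - m ω)) := by
      intro ω
      have h := Real.add_one_le_exp (lam * (T - m ω) - a)
      calc Real.exp a * (1 + (lam * (T - m ω) - a))
          ≤ Real.exp a * Real.exp (lam * (T - m ω) - a) :=
            mul_le_mul_of_nonneg_left (by linarith) (Real.exp_nonneg _)
        _ = Real.exp (lam * (T - m ω)) := by rw [← Real.exp_add]; ring_nf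
    have hEint : Integrable (fun ω => Real.exp (lam * (T - m ω))) P := by
      refine Integrable.mono' (integrable_finset_sum Finset.univ
        (fun j _ => (htrans lam hlam.le j).1)) (Real.measurable_exp.comp
        (measurable_const.mul (measurable_const.sub hmm))).aestronglyMeasurable ?_
      filter_upwards with ω
      obtain ⟨j, hj⟩ := hmem ω
      rw [Real.norm_eq_abs, abs_of_nonneg (Real.exp_nonneg _), hj]
      exact Finset.single_le_sum (f := fun j => Real.exp (lam * (T - ζ j ω)))
        (fun j _ => Real.exp_nonneg _) (Finset.mem_univ j)
    have hfe : (fun ω => Real.exp a * (1 + (lam * (T - m ω) - a)))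
        = fun ω => (Real.exp a * (1 + lam * T - a)) - (Real.exp a * lam) * m ω := by
      funext ω; ring
    have htanint : Integrable (fun ω => Real.exp a * (1 + (lam * (T - m ω) - a))) P := by
      rw [hfe]
      exact (integrable_const _).sub (hmint.const_mul _)
    have hint_eq : ∫ ω, Real.exp a * (1 + (lam * (T - m ω) - a)) ∂P = Real.exp a := by
      rw [hfe, integral_sub (integrable_const _) (hmint.const_mul _), integral_const,
        integral_const_mul, probReal_univ]
      simp only [ENNReal.toReal_one, smul_eq_mul, one_mul]
      rw [hadef]
      ring
    have h1 : Real.exp a ≤ ∫ ω, Real.exp (lam * (T - m ω)) ∂P := by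
      rw [← hint_eq]
      exact integral_mono htanint hEint htangent
    have h2 : ∫ ω, Real.exp (lam * (T - m ω)) ∂P ≤ n * Real.exp (lam ^ 2 * σ2) := by
      calc ∫ ω, Real.exp (lam * (T - m ω)) ∂P
          ≤ ∫ ω, ∑ j, Real.exp (lam * (T - ζ j ω)) ∂P := by
            refine integral_mono hEint
              (integrable_finset_sum _ (fun j _ => (htrans lam hlam.le j).1)) ?_
            intro ω
            obtain ⟨j, hj⟩ := hmem ω
            simp only []
            rw [hj]
            exact Finset.single_le_sum (f := fun j => Real.exp (lam * (T - ζ j ω)))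
              (fun j _ => Real.exp_nonneg _) (Finset.mem_univ j)
        _ = ∑ j, ∫ ω, Real.exp (lam * (T - ζ j ω)) ∂P :=
            integral_finset_sum _ (fun j _ => (htrans lam hlam.le j).1)
        _ ≤ ∑ _j : Fin n, Real.exp (lam ^ 2 * σ2) :=
            Finset.sum_le_sum (fun j _ => (htrans lam hlam.le j).2)
        _ = n * Real.exp (lam ^ 2 * σ2) := by
            rw [Finset.sum_const, Finset.card_univ, Fintype.card_fin, nsmul_eq_mul]
    have hn0 : (0:ℝ) < n := by
      have : 0 < n := hn
      exact_mod_cast this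
    have h3 := Real.log_le_log (Real.exp_pos a) (h1.trans h2)
    rw [Real.log_exp, Real.log_mul (ne_of_gt hn0) (ne_of_gt (Real.exp_pos _)),
      Real.log_exp] at h3
    exact hadef ▸ h3
  -- final computation
  have hfinal : T - I ≤ 2 * Real.sqrt σ2 * Real.sqrt (Real.log n) := by
    rcases eq_or_lt_of_le hn with h1 | h1
    · -- n = 1
      have hlog : Real.log n = 0 := by rw [← h1]; norm_num
      rw [hlog, Real.sqrt_zero, mul_zero]
      have hall : ∀ lam : ℝ, 0 < lam → T - I ≤ lam * σ2 := by
        intro lam hlam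
        have hb := key lam hlam
        rw [hlog] at hb
        nlinarith [hb, hlam]
      by_contra hc
      push_neg at hc
      have hb := hall ((T - I) / (2 * σ2)) (by positivity)
      have heq2 : (T - I) / (2 * σ2) * σ2 = (T - I) / 2 := by
        field_simp
      rw [heq2] at hb
      linarith
    · -- 2 ≤ n
      have hL : 0 < Real.log n := Real.log_pos (by exact_mod_cast h1)
      set u := Real.sqrt (Real.log n) with hu
      set v := Real.sqrt σ2 with hv
      have hu0 : 0 < u := Real.sqrt_pos.mpr hL
      have hv0 : 0 < v := Real.sqrt_pos.mpr hσ2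
      have huu : u * u = Real.log n := Real.mul_self_sqrt hL.le
      have hvv : v * v = σ2 := Real.mul_self_sqrt hσ2.le
      have hk := key (u / v) (by positivity)
      have hk2 : (u / v) * (T - I) ≤ 2 * (u * u) := by
        have h4 : (u / v) ^ 2 * σ2 = u * u := by
          rw [div_pow, ← hvv]
          field_simp
        calc (u / v) * (T - I) ≤ Real.log n + (u / v) ^ 2 * σ2 := hk
          _ = 2 * (u * u) := by rw [h4, ← huu]; ring
      have h5 := mul_le_mul_of_nonneg_left hk2 (le_of_lt (div_pos hv0 hu0))
      have hl : (v / u) * ((u / v) * (T - I)) = T - I := by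
        field_simp
      rw [hl] at h5
      calc T - I ≤ (v / u) * (2 * (u * u)) := h5
        _ = 2 * v * u := by field_simp
  have hfrac : T * (1 - 2 * (Real.sqrt σ2 / T) * Real.sqrt (Real.log n))
      = T - 2 * Real.sqrt σ2 * Real.sqrt (Real.log n) := by
    field_simp
  show T * (1 - 2 * (Real.sqrt σ2 / T) * Real.sqrt (Real.log n)) ≤ I
  rw [hfrac]
  linarith [hfinal]
end

section
/- Let r ≥ 1, let s_1, …, s_r be positive reals, let X_1, …, X_r be i.i.d. standard real Gaussian random variables, and set ζ := Σ_{l=1}^r s_l·X_l², T := Σ_{l=1}^r s_l, σ := (Σ_{l=1}^r s_l²)^{1/2}. Then for every x with 0 ≤ x ≤ T, P(ζ ≤ x) ≤ exp( −(T − x)²/(4σ²) ). -/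
open MeasureTheory ProbabilityTheory
open scoped NNReal ENNReal

lemma aux_exp_le (u : ℝ) (hu : 0 ≤ u) : Real.exp (u - u ^ 2 / 2) ≤ 1 + u := by
  set g : ℝ → ℝ := fun z => (1 + z) * Real.exp (z ^ 2 / 2 - z) with hg
  have hderiv : ∀ y : ℝ, HasDerivAt g (y ^ 2 * Real.exp (y ^ 2 / 2 - y)) y := by
    intro y
    have h1 : HasDerivAt (fun z : ℝ => z ^ 2 / 2 - z) (y - 1) y := by
      have := ((hasDerivAt_pow 2 y).div_const 2).fun_sub (hasDerivAt_id y)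
      simpa using this
    have h2 : HasDerivAt (fun z : ℝ => Real.exp (z ^ 2 / 2 - z))
        (Real.exp (y ^ 2 / 2 - y) * (y - 1)) y := h1.exp
    have h3 : HasDerivAt (fun z : ℝ => 1 + z) 1 y := by
      simpa using (hasDerivAt_id y).const_add 1
    have := h3.fun_mul h2
    refine this.congr_deriv ?_
    ring
  have hmono : MonotoneOn g (Set.Ici (0 : ℝ)) := by
    apply monotoneOn_of_deriv_nonneg (convex_Ici 0)
    · exact Continuous.continuousOn (by continuity)
    · intro y hy
      exact (hderiv y).differentiableAt.differentiableWithinAt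
    · intro y hy
      rw [(hderiv y).deriv]
      positivity
  have h0 : 1 ≤ (1 + u) * Real.exp (u ^ 2 / 2 - u) := by
    have := hmono (Set.self_mem_Ici) hu hu
    simpa [hg] using this
  have hEpos : 0 < Real.exp (u ^ 2 / 2 - u) := Real.exp_pos _
  have hinv : (Real.exp (u ^ 2 / 2 - u))⁻¹ ≤ 1 + u := by
    rw [inv_le_iff_one_le_mul₀ hEpos]
    nlinarith [h0]
  calc Real.exp (u - u ^ 2 / 2) = (Real.exp (u ^ 2 / 2 - u))⁻¹ := by
        rw [← Real.exp_neg]; ring_nf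
    _ ≤ 1 + u := hinv

lemma aux_gauss_integral (c : ℝ) (hc : 0 ≤ c) :
    ∫ y, Real.exp (-(c * y ^ 2)) ∂(gaussianReal 0 1) = (Real.sqrt (1 + 2 * c))⁻¹ := by
  rw [gaussianReal_of_var_ne_zero 0 one_ne_zero]
  have hPDF : (gaussianPDF 0 1)
      = fun y => ((Real.toNNReal (gaussianPDFReal 0 1 y) : ℝ≥0) : ℝ≥0∞) := by
    funext y; rfl
  rw [hPDF, integral_withDensity_eq_integral_smul
    ((measurable_gaussianPDFReal 0 1).real_toNNReal)]
  have heq : ∀ y : ℝ, (Real.toNNReal (gaussianPDFReal 0 1 y)) • Real.exp (-(c * y ^ 2))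
      = (Real.sqrt (2 * Real.pi))⁻¹ * Real.exp (-(c + 1 / 2) * y ^ 2) := by
    intro y
    rw [NNReal.smul_def, smul_eq_mul, Real.coe_toNNReal _ (gaussianPDFReal_nonneg 0 1 y)]
    simp only [gaussianPDFReal, NNReal.coe_one, mul_one, sub_zero]
    rw [mul_assoc, ← Real.exp_add]
    congr 1
    ring
  simp_rw [heq]
  rw [integral_const_mul, integral_gaussian]
  have hpi : (0 : ℝ) < Real.pi := Real.pi_pos
  have h1 : (0 : ℝ) < 1 + 2 * c := by linarith
  have hchalf : (0 : ℝ) < c + 1 / 2 := by linarith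
  have hfrac : Real.pi / (c + 1 / 2) = 2 * Real.pi / (1 + 2 * c) := by
    field_simp; ring
  rw [hfrac, Real.sqrt_div (by positivity : (0:ℝ) ≤ 2 * Real.pi)]
  have h2 : (0 : ℝ) < Real.sqrt (2 * Real.pi) := Real.sqrt_pos.mpr (by linarith)
  have h3 : (0 : ℝ) < Real.sqrt (1 + 2 * c) := Real.sqrt_pos.mpr h1
  field_simp

/-- For `ζ = Σ_l s_l X_l²` with `X_l` i.i.d. standard Gaussians,
`T = Σ_l s_l` and `σ² = Σ_l s_l²`, for every `0 ≤ x ≤ T`,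
`P(ζ ≤ x) ≤ exp(−(T − x)²/(4σ²))`. -/
theorem statement13 {Ω : Type*} [MeasurableSpace Ω] (P : Measure Ω) [IsProbabilityMeasure P]
    (r : ℕ) (hr : 1 ≤ r) (s : Fin r → ℝ) (hs : ∀ l, 0 < s l)
    (X : Fin r → Ω → ℝ) (hXm : ∀ l, Measurable (X l))
    (hXi : iIndepFun X P)
    (hXg : ∀ l, Measure.map (X l) P = gaussianReal 0 1)
    (x : ℝ) (hx0 : 0 ≤ x) (hxT : x ≤ ∑ l, s l) :
    P {ω | ∑ l, s l * X l ω ^ 2 ≤ x} ≤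
      ENNReal.ofReal (Real.exp (-((∑ l, s l) - x) ^ 2 / (4 * ∑ l, s l ^ 2))) := by
  classical
  have hrne : Nonempty (Fin r) := ⟨⟨0, hr⟩⟩
  set T : ℝ := ∑ l, s l with hT
  set σ2 : ℝ := ∑ l, s l ^ 2 with hσ2def
  have hσ2 : 0 < σ2 := Finset.sum_pos (fun l _ => pow_pos (hs l) 2) Finset.univ_nonempty
  set t : ℝ := (T - x) / (2 * σ2) with htdef
  have ht : 0 ≤ t := div_nonneg (by linarith) (by linarith)
  set Y : Fin r → Ω → ℝ := fun l ω => s l * X l ω ^ 2 with hYdef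
  have hYm : ∀ l, Measurable (Y l) := fun l => (measurable_const.mul ((hXm l).pow_const 2))
  have hYi : iIndepFun Y P := by
    have := hXi.comp (fun l (y : ℝ) => s l * y ^ 2)
      (fun l => measurable_const.mul (measurable_id.pow_const 2))
    exact this
  have hsumapp : (∑ l, Y l) = fun ω => ∑ l, Y l ω := by
    funext ω; exact Finset.sum_apply ω Finset.univ Y
  have hsm : Measurable (∑ l, Y l) := by
    rw [hsumapp]; exact Finset.measurable_sum _ fun l _ => hYm l
  have hYnonneg : ∀ ω, 0 ≤ (∑ l, Y l) ω := by
    intro ω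
    rw [hsumapp]
    exact Finset.sum_nonneg fun l _ => mul_nonneg (hs l).le (sq_nonneg _)
  have h_int : Integrable (fun ω => Real.exp (-t * (∑ l, Y l) ω)) P := by
    refine Integrable.mono' (integrable_const 1)
      ((hsm.const_mul (-t)).exp.aestronglyMeasurable)
      (ae_of_all _ fun ω => ?_)
    rw [Real.norm_eq_abs, abs_of_pos (Real.exp_pos _), Real.exp_le_one_iff]
    have := hYnonneg ω
    nlinarith
  have hcher := measure_le_le_exp_mul_mgf (X := ∑ l, Y l) (μ := P) (t := -t) x
    (neg_nonpos.mpr ht) h_int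
  have hfac : mgf (∑ l, Y l) P (-t) = ∏ l, mgf (Y l) P (-t) :=
    hYi.mgf_sum hYm Finset.univ
  have hone : ∀ l, mgf (Y l) P (-t) = (Real.sqrt (1 + 2 * (t * s l)))⁻¹ := by
    intro l
    have hg : AEStronglyMeasurable (fun y : ℝ => Real.exp (-(t * s l * y ^ 2)))
        (Measure.map (X l) P) :=
      (((measurable_id.pow_const 2).const_mul (t * s l)).neg.exp).aestronglyMeasurable
    have hmap : ∫ ω, Real.exp (-t * Y l ω) ∂P
        = ∫ y, Real.exp (-(t * s l * y ^ 2)) ∂(gaussianReal 0 1) := by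
      rw [← hXg l, integral_map (hXm l).aemeasurable hg]
      congr 1; funext ω; congr 1; simp only [hYdef]; ring
    rw [mgf]
    rw [show (fun ω => Real.exp (-t * Y l ω)) = fun ω => Real.exp (-t * Y l ω) from rfl] at *
    rw [show (P[fun ω => Real.exp (-t * Y l ω)]) = ∫ ω, Real.exp (-t * Y l ω) ∂P from rfl,
      hmap]
    have : (fun y : ℝ => Real.exp (-(t * s l * y ^ 2)))
        = fun y : ℝ => Real.exp (-((t * s l) * y ^ 2)) := rfl
    rw [this, aux_gauss_integral (t * s l) (mul_nonneg ht (hs l).le)]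
  have hbound : ∀ l, mgf (Y l) P (-t) ≤ Real.exp ((t * s l) ^ 2 - t * s l) := by
    intro l
    rw [hone l]
    set c : ℝ := t * s l with hc
    have hc0 : 0 ≤ c := mul_nonneg ht (hs l).le
    have h1 : Real.exp (2 * c - (2 * c) ^ 2 / 2) ≤ 1 + 2 * c :=
      aux_exp_le (2 * c) (by linarith)
    have h2 : Real.exp (c - c ^ 2) ≤ Real.sqrt (1 + 2 * c) := by
      rw [show (1 + 2 * c : ℝ) = Real.sqrt ((1 + 2 * c) ^ 2) from
        (Real.sqrt_sq (by linarith)).symm] at h1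
      have h1' : Real.exp (c - c ^ 2) ^ 2 ≤ 1 + 2 * c := by
        rw [sq, ← Real.exp_add]
        calc Real.exp (c - c ^ 2 + (c - c ^ 2))
            = Real.exp (2 * c - (2 * c) ^ 2 / 2) := by ring_nf
          _ ≤ 1 + 2 * c := aux_exp_le (2 * c) (by linarith)
      have := Real.sqrt_le_sqrt h1'
      rwa [Real.sqrt_sq (Real.exp_pos _).le] at this
    have hepos : 0 < Real.exp (c - c ^ 2) := Real.exp_pos _
    rw [show Real.exp (c ^ 2 - c) = (Real.exp (c - c ^ 2))⁻¹ by
      rw [← Real.exp_neg]; ring_nf]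
    exact inv_anti₀ hepos h2
  have hprod : ∏ l, mgf (Y l) P (-t) ≤ Real.exp (t ^ 2 * σ2 - t * T) := by
    calc ∏ l, mgf (Y l) P (-t) ≤ ∏ l, Real.exp ((t * s l) ^ 2 - t * s l) :=
          Finset.prod_le_prod (fun l _ => mgf_nonneg) (fun l _ => hbound l)
      _ = Real.exp (∑ l, ((t * s l) ^ 2 - t * s l)) := by rw [Real.exp_sum]
      _ = Real.exp (t ^ 2 * σ2 - t * T) := by
          congr 1
          rw [Finset.sum_sub_distrib]
          congr 1
          · rw [hσ2def, Finset.mul_sum]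
            exact Finset.sum_congr rfl fun l _ => by ring
          · rw [hT, Finset.mul_sum]
  have hfinal : (P {ω | ∑ l, s l * X l ω ^ 2 ≤ x}).toReal
      ≤ Real.exp (-(T - x) ^ 2 / (4 * σ2)) := by
    have hsetEq : {ω | ∑ l, s l * X l ω ^ 2 ≤ x} = {ω | (∑ l, Y l) ω ≤ x} := by
      ext ω; rw [hsumapp]
    rw [hsetEq]
    refine hcher.trans ?_
    rw [hfac]
    calc Real.exp (-(-t) * x) * ∏ l, mgf (Y l) P (-t)
        ≤ Real.exp (-(-t) * x) * Real.exp (t ^ 2 * σ2 - t * T) :=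
          mul_le_mul_of_nonneg_left hprod (Real.exp_pos _).le
      _ = Real.exp (t * x + (t ^ 2 * σ2 - t * T)) := by
          rw [← Real.exp_add]; ring_nf
      _ = Real.exp (-(T - x) ^ 2 / (4 * σ2)) := by
          congr 1
          rw [htdef]
          have hne : σ2 ≠ 0 := hσ2.ne'
          field_simp
          ring
  refine le_trans (le_of_eq (ENNReal.ofReal_toReal (measure_ne_top P _)).symm)
    (ENNReal.ofReal_le_ofReal hfinal)
end

section
/- Let n ≥ 1 and r ≥ 1, let s_1, …, s_r be positive reals, and let ζ_1, …, ζ_n be real random variables on a common probability space, not necessarily independent, such that each ζ_j has the same distribution as Σ_{l=1}^r s_l·X_l² where X_1, …, X_r are i.i.d. standard real Gaussians. Set T := Σ_{l=1}^r s_l and σ := (Σ_{l=1}^r s_l²)^{1/2}. Then for every γ with 0 ≤ γ ≤ 1, P( min_{1≤j≤n} ζ_j ≥ T·(1−γ) ) ≥ 1 − n·exp( −T²·γ²/(4σ²) ). -/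
open MeasureTheory ProbabilityTheory

section Aux
open Real
open scoped ENNReal NNReal

lemma aux_log_bound (u : ℝ) (hu : 0 ≤ u) : u - u ^ 2 / 2 ≤ Real.log (1 + u) := by
  set f : ℝ → ℝ := fun x => Real.log (1 + x) - x + x ^ 2 / 2 with hf
  have hderiv : ∀ x ∈ Set.Ici (0 : ℝ), HasDerivAt f (1 / (1 + x) - 1 + x) x := by
    intro x hx
    simp only [Set.mem_Ici] at hx
    have h1 : (0 : ℝ) < 1 + x := by linarith
    have hl : HasDerivAt (fun x : ℝ => Real.log (1 + x)) (1 / (1 + x)) x := by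
      have := ((hasDerivAt_id x).const_add 1).log h1.ne'
      simpa using this
    have hq : HasDerivAt (fun x : ℝ => x ^ 2 / 2) x x := by
      simpa using ((hasDerivAt_pow 2 x).div_const 2)
    exact (hl.sub (hasDerivAt_id x)).add hq
  have hmono : MonotoneOn f (Set.Ici (0 : ℝ)) := by
    apply monotoneOn_of_deriv_nonneg (convex_Ici 0)
    · exact fun x hx => ((hderiv x hx).continuousAt).continuousWithinAt
    · intro x hx
      rw [interior_Ici] at hx
      exact ((hderiv x (Set.Ioi_subset_Ici_self hx)).differentiableAt).differentiableWithinAt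
    · intro x hx
      rw [interior_Ici] at hx
      rw [(hderiv x (Set.Ioi_subset_Ici_self hx)).deriv]
      have h1 : (0 : ℝ) < 1 + x := by
        have : (0:ℝ) < x := hx
        linarith
      have e : (1 / (1 + x)) * (1 + x) = 1 := div_mul_cancel₀ 1 h1.ne'
      nlinarith [sq_nonneg x, e, one_div_pos.mpr h1, (show (0:ℝ) < x from hx)]
  have h0 : f 0 ≤ f u := hmono (by simp) hu hu
  simp [hf] at h0
  linarith

lemma aux_sqrt_bound (c : ℝ) (hc : 0 ≤ c) :
    (Real.sqrt (1 + 2 * c))⁻¹ ≤ Real.exp (c ^ 2 - c) := by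
  have h1 : (0 : ℝ) < 1 + 2 * c := by linarith
  have key : Real.exp (2 * (c - c ^ 2)) ≤ 1 + 2 * c := by
    have h := aux_log_bound (2 * c) (by linarith)
    calc Real.exp (2 * (c - c ^ 2)) = Real.exp (2 * c - (2 * c) ^ 2 / 2) := by ring_nf
      _ ≤ Real.exp (Real.log (1 + 2 * c)) := Real.exp_le_exp.mpr h
      _ = 1 + 2 * c := Real.exp_log h1
  have h2 : Real.exp (c - c ^ 2) ≤ Real.sqrt (1 + 2 * c) := by
    calc Real.exp (c - c ^ 2) = Real.exp (2 * (c - c ^ 2) / 2) := by ring_nf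
      _ = Real.sqrt (Real.exp (2 * (c - c ^ 2))) := Real.exp_half _
      _ ≤ Real.sqrt (1 + 2 * c) := Real.sqrt_le_sqrt key
  have h3 := inv_anti₀ (Real.exp_pos _) h2
  rwa [← Real.exp_neg, neg_sub] at h3

lemma aux_gauss_int (c : ℝ) (hc : 0 ≤ c) :
    ∫ x : ℝ, Real.exp (-c * x ^ 2) ∂(gaussianReal 0 1) = (Real.sqrt (1 + 2 * c))⁻¹ := by
  rw [gaussianReal_of_var_ne_zero 0 one_ne_zero]
  have hpdf : gaussianPDF 0 1 = fun x => ((Real.toNNReal (gaussianPDFReal 0 1 x) : ℝ≥0) : ℝ≥0∞) := by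
    ext x; simp [gaussianPDF, ENNReal.ofReal]
  rw [hpdf, integral_withDensity_eq_integral_smul ((measurable_gaussianPDFReal 0 1).real_toNNReal)]
  have heq : ∀ x : ℝ, (Real.toNNReal (gaussianPDFReal 0 1 x) : ℝ≥0) • Real.exp (-c * x ^ 2)
      = (Real.sqrt (2 * π))⁻¹ * Real.exp (-(c + 1/2) * x ^ 2) := by
    intro x
    rw [NNReal.smul_def, smul_eq_mul, Real.coe_toNNReal _ (gaussianPDFReal_nonneg 0 1 x)]
    have hg : gaussianPDFReal 0 1 x = (Real.sqrt (2 * π))⁻¹ * Real.exp (-x ^ 2 / 2) := by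
      simp [gaussianPDFReal]
    rw [hg, mul_assoc, ← Real.exp_add]
    congr 1
    ring
  simp_rw [heq]
  rw [integral_const_mul, integral_gaussian]
  have hpos : (0:ℝ) < c + 1/2 := by linarith
  have h5 : π / (c + 1/2) = (2*π) * (1 + 2*c)⁻¹ := by
    rw [div_eq_iff hpos.ne']
    field_simp
    ring
  rw [h5, Real.sqrt_mul (by positivity : (0:ℝ) ≤ 2*π) ((1+2*c)⁻¹), Real.sqrt_inv, ← mul_assoc,
    inv_mul_cancel₀ (by positivity : Real.sqrt (2*π) ≠ 0), one_mul]

lemma aux_pi_prod {r : ℕ} (f : Fin r → ℝ → ℝ) :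
    ∫ x : Fin r → ℝ, ∏ l, f l (x l) ∂(Measure.pi fun _ => gaussianReal 0 1)
      = ∏ l, ∫ x : ℝ, f l x ∂(gaussianReal 0 1) := by
  letI ms : MeasureSpace ℝ := ⟨gaussianReal 0 1⟩
  haveI : SigmaFinite (volume : Measure ℝ) :=
    inferInstanceAs (SigmaFinite (gaussianReal 0 1))
  exact integral_fintype_prod_eq_prod (𝕜 := ℝ) f

end Aux

/-- If each `ζ_j` (not necessarily independent) is distributed as
`Σ_l s_l X_l²` with `X_l` i.i.d. standard Gaussians, `T = Σ_l s_l`, `σ² = Σ_l s_l²`, then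
for every `0 ≤ γ ≤ 1`, `P(min_j ζ_j ≥ T(1−γ)) ≥ 1 − n exp(−T²γ²/(4σ²))`. -/
theorem statement14 {Ω : Type*} [MeasurableSpace Ω] (P : Measure Ω) [IsProbabilityMeasure P]
    (n r : ℕ) (hn : 1 ≤ n) (hr : 1 ≤ r) (s : Fin r → ℝ) (hs : ∀ l, 0 < s l)
    (ζ : Fin n → Ω → ℝ) (hζm : ∀ j, Measurable (ζ j))
    (hζd : ∀ j, Measure.map (ζ j) P = chiSqCombo r s)
    (γ : ℝ) (hγ0 : 0 ≤ γ) (hγ1 : γ ≤ 1) :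
    ENNReal.ofReal
        (1 - n * Real.exp (-((∑ l, s l) ^ 2 * γ ^ 2) / (4 * ∑ l, s l ^ 2))) ≤
      P {ω | (∑ l, s l) * (1 - γ) ≤ ⨅ j, ζ j ω} := by
  haveI : Nonempty (Fin n) := ⟨⟨0, hn⟩⟩
  haveI : Nonempty (Fin r) := ⟨⟨0, hr⟩⟩
  set T : ℝ := ∑ l, s l with hT_def
  set σ2 : ℝ := ∑ l, s l ^ 2 with hσ2_def
  have hT : 0 < T := Finset.sum_pos (fun l _ => hs l) Finset.univ_nonempty
  have hσ2 : 0 < σ2 := Finset.sum_pos (fun l _ => pow_pos (hs l) 2) Finset.univ_nonempty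
  set lam : ℝ := T * γ / (2 * σ2) with hlam_def
  have hlam : 0 ≤ lam := div_nonneg (mul_nonneg hT.le hγ0) (by positivity)
  set a : ℝ := T * (1 - γ) with ha_def
  set E : ℝ := Real.exp (-(T ^ 2 * γ ^ 2) / (4 * σ2)) with hE_def
  have hE0 : 0 ≤ E := (Real.exp_pos _).le
  -- measurability of the sum map
  have hF : Measurable (fun x : Fin r → ℝ => ∑ l, s l * x l ^ 2) := by fun_prop
  have hcont : Continuous (fun y : ℝ => Real.exp (-lam * y)) := by fun_prop
  -- value of the mgf over the pi measure
  have hexp_eq : ∀ x : Fin r → ℝ, Real.exp (-lam * ∑ l, s l * x l ^ 2)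
      = ∏ l, Real.exp (-(lam * s l) * x l ^ 2) := by
    intro x
    rw [← Real.exp_sum]
    congr 1
    rw [Finset.mul_sum]
    exact Finset.sum_congr rfl fun l _ => by ring
  have hmgf_pi : ∫ x : Fin r → ℝ, Real.exp (-lam * ∑ l, s l * x l ^ 2)
      ∂(Measure.pi fun _ => gaussianReal 0 1)
      = ∏ l, (Real.sqrt (1 + 2 * (lam * s l)))⁻¹ := by
    simp only [hexp_eq]
    exact (aux_pi_prod (fun l t => Real.exp (-(lam * s l) * t ^ 2))).trans
      (Finset.prod_congr rfl fun l _ => aux_gauss_int _ (mul_nonneg hlam (hs l).le))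
  -- integrability
  have hsum_nonneg : ∀ x : Fin r → ℝ, 0 ≤ ∑ l, s l * x l ^ 2 := fun x =>
    Finset.sum_nonneg fun l _ => mul_nonneg (hs l).le (sq_nonneg _)
  have hint_pi : Integrable (fun x : Fin r → ℝ => Real.exp (-lam * ∑ l, s l * x l ^ 2))
      (Measure.pi fun _ => gaussianReal 0 1) := by
    refine Integrable.mono' (integrable_const 1) ?_ ?_
    · exact ((hF.const_mul (-lam)).exp).aestronglyMeasurable
    · filter_upwards with x
      rw [Real.norm_eq_abs, abs_of_pos (Real.exp_pos _), Real.exp_le_one_iff]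
      exact mul_nonpos_of_nonpos_of_nonneg (neg_nonpos.mpr hlam) (hsum_nonneg x)
  have hint_chi : Integrable (fun y : ℝ => Real.exp (-lam * y)) (chiSqCombo r s) := by
    rw [chiSqCombo, integrable_map_measure hcont.aestronglyMeasurable hF.aemeasurable]
    exact hint_pi
  have hint_P : ∀ j, Integrable (fun ω => Real.exp (-lam * ζ j ω)) P := by
    intro j
    have h := hint_chi
    rw [← hζd j] at h
    exact (integrable_map_measure hcont.aestronglyMeasurable (hζm j).aemeasurable).mp h
  -- mgf value
  have hmgf : ∀ j, mgf (ζ j) P (-lam) = ∏ l, (Real.sqrt (1 + 2 * (lam * s l)))⁻¹ := by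
    intro j
    show ∫ ω, Real.exp (-lam * ζ j ω) ∂P = _
    rw [← integral_map (hζm j).aemeasurable hcont.aestronglyMeasurable, hζd j, chiSqCombo,
      integral_map hF.aemeasurable hcont.aestronglyMeasurable]
    exact hmgf_pi
  -- Chernoff bound
  have hcher : ∀ j, (P {ω | ζ j ω ≤ a}).toReal ≤ E := by
    intro j
    have h := measure_le_le_exp_mul_mgf (X := ζ j) (μ := P) (t := -lam) a
      (neg_nonpos.mpr hlam) (by simpa using hint_P j)
    rw [neg_neg, hmgf j] at h
    refine h.trans ?_
    have e1 : ∑ l, ((lam * s l) ^ 2 - lam * s l) = lam ^ 2 * σ2 - lam * T := by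
      rw [Finset.sum_sub_distrib]
      simp_rw [mul_pow]
      rw [← Finset.mul_sum, ← Finset.mul_sum]
    calc Real.exp (lam * a) * ∏ l, (Real.sqrt (1 + 2 * (lam * s l)))⁻¹
        ≤ Real.exp (lam * a) * ∏ l, Real.exp ((lam * s l) ^ 2 - lam * s l) := by
          refine mul_le_mul_of_nonneg_left (Finset.prod_le_prod ?_ ?_) (Real.exp_pos _).le
          · intro l _; positivity
          · intro l _; exact aux_sqrt_bound _ (mul_nonneg hlam (hs l).le)
      _ = Real.exp (lam * a + ∑ l, ((lam * s l) ^ 2 - lam * s l)) := by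
          rw [← Real.exp_sum, ← Real.exp_add]
      _ = E := by
          rw [e1, hE_def]
          congr 1
          rw [ha_def, hlam_def]
          field_simp
          ring
  -- per-j probability bound
  have hj : ∀ j, P {ω | ζ j ω < a} ≤ ENNReal.ofReal E := by
    intro j
    have hss : {ω | ζ j ω < a} ⊆ {ω | ζ j ω ≤ a} := by
      intro ω h
      simp only [Set.mem_setOf_eq] at h ⊢
      exact h.le
    refine (measure_mono hss).trans ?_
    rw [← ENNReal.ofReal_toReal (measure_ne_top P {ω | ζ j ω ≤ a})]
    exact ENNReal.ofReal_le_ofReal (hcher j)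
  -- rewrite the event
  have hset : {ω | a ≤ ⨅ j, ζ j ω} = ⋂ j, {ω | a ≤ ζ j ω} := by
    ext ω
    simp only [Set.mem_setOf_eq, Set.mem_iInter]
    exact le_ciInf_iff (Set.Finite.bddBelow (Set.finite_range _))
  have hMeasA : MeasurableSet (⋂ j, {ω | a ≤ ζ j ω}) :=
    MeasurableSet.iInter fun j => measurableSet_le measurable_const (hζm j)
  have hcompl_eq : (⋂ j, {ω | a ≤ ζ j ω})ᶜ = ⋃ j, {ω | ζ j ω < a} := by
    rw [Set.compl_iInter]
    congr 1
    ext j ω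
    simp [not_le]

  have hcompl : P ((⋂ j, {ω | a ≤ ζ j ω})ᶜ) ≤ ENNReal.ofReal ((n : ℝ) * E) := by
    rw [hcompl_eq]
    refine (measure_iUnion_le _).trans ?_
    rw [tsum_fintype]
    calc ∑ j, P {ω | ζ j ω < a} ≤ ∑ _j : Fin n, ENNReal.ofReal E :=
          Finset.sum_le_sum fun j _ => hj j
      _ = n * ENNReal.ofReal E := by
          simp [Finset.sum_const, nsmul_eq_mul]
      _ = ENNReal.ofReal ((n : ℝ) * E) := by
          rw [ENNReal.ofReal_mul (by positivity), ENNReal.ofReal_natCast]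
  have hsum1 : P (⋂ j, {ω | a ≤ ζ j ω}) + P ((⋂ j, {ω | a ≤ ζ j ω})ᶜ) = 1 :=
    prob_add_prob_compl hMeasA
  rw [hset]
  calc ENNReal.ofReal (1 - n * E)
      = 1 - ENNReal.ofReal ((n : ℝ) * E) := by
        rw [ENNReal.ofReal_sub _ (by positivity), ENNReal.ofReal_one]
    _ ≤ 1 - P ((⋂ j, {ω | a ≤ ζ j ω})ᶜ) := tsub_le_tsub_left hcompl 1
    _ ≤ P (⋂ j, {ω | a ≤ ζ j ω}) := by
        rw [tsub_le_iff_right]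
        exact le_of_eq hsum1.symm
end

section
/- Let r ≥ 1, let s_1, …, s_r be positive reals, let X_1, …, X_r be i.i.d. standard real Gaussian random variables, and set ζ := Σ_{l=1}^r s_l·X_l², T := Σ_{l=1}^r s_l, σ := (Σ_{l=1}^r s_l²)^{1/2}, s_max := max_{1≤l≤r} s_l. Then for every ε ≥ 0: if ε ≤ σ²/s_max, then P(ζ ≤ T + ε) ≥ 1 − exp(−ε²/(8σ²)); otherwise P(ζ ≤ T + ε) ≥ 1 − exp(−ε/(8·s_max)). -/
open MeasureTheory ProbabilityTheory Real
open scoped ENNReal NNReal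

lemma log_ineq_aux' {x : ℝ} (h0 : 0 ≤ x) (h1 : x ≤ 1/2) :
    Real.exp (-(x + x^2)) ≤ 1 - x := by
  have hx1 : (0:ℝ) < 1 - x := by linarith
  rw [← Real.exp_log hx1, Real.exp_le_exp]
  set f : ℝ → ℝ := fun t => Real.log (1 - t) + (t + t^2) with hf
  have key : MonotoneOn f (Set.Icc (0:ℝ) (1/2)) := by
    apply monotoneOn_of_deriv_nonneg (convex_Icc _ _)
    · intro t ht
      have : (1:ℝ) - t ≠ 0 := by
        have := ht.2; have := ht.1; simp only [Set.mem_Icc] at *; intro h; linarith [ht.2]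
      fun_prop (disch := assumption)
    · intro t ht
      rw [interior_Icc] at ht
      have h1t : (1:ℝ) - t ≠ 0 := by intro h; have := ht.2; simp at *; linarith
      have hd : HasDerivAt f ((1-t)⁻¹ * (-1) + (1 + 2*t)) t := by
        have hlog : HasDerivAt (fun t : ℝ => Real.log (1 - t)) ((1-t)⁻¹ * (-1)) t := by
          have hinner : HasDerivAt (fun t : ℝ => 1 - t) (-1) t := by
            simpa [Pi.sub_def] using (hasDerivAt_const t (1:ℝ)).sub (hasDerivAt_id t)
          exact (Real.hasDerivAt_log h1t).comp t hinner
        have hpoly : HasDerivAt (fun t : ℝ => t + t^2) (1 + 2*t) t := by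
          have := (hasDerivAt_id t).add (hasDerivAt_pow 2 t)
          simpa [Pi.add_def] using this
        simpa [Pi.add_def] using hlog.add hpoly
      · rw [interior_Icc] at *
        have h1t : (1:ℝ) - t ≠ 0 := by intro h; have := ht.2; linarith
        exact (hd.differentiableAt.differentiableWithinAt)
    · intro t ht
      rw [interior_Icc] at ht
      obtain ⟨ht0, ht1⟩ := ht
      have h1t : (0:ℝ) < 1 - t := by linarith
      have hd : HasDerivAt f ((1-t)⁻¹ * (-1) + (1 + 2*t)) t := by
        have hlog : HasDerivAt (fun t : ℝ => Real.log (1 - t)) ((1-t)⁻¹ * (-1)) t := by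
          have hinner : HasDerivAt (fun t : ℝ => 1 - t) (-1) t := by
            simpa [Pi.sub_def] using (hasDerivAt_const t (1:ℝ)).sub (hasDerivAt_id t)
          exact (Real.hasDerivAt_log h1t.ne').comp t hinner
        have hpoly : HasDerivAt (fun t : ℝ => t + t^2) (1 + 2*t) t := by
          have := (hasDerivAt_id t).add (hasDerivAt_pow 2 t)
          simpa [Pi.add_def] using this
        simpa [Pi.add_def] using hlog.add hpoly
      rw [hd.deriv]
      have h2 : (1-t)⁻¹ ≤ 1 + 2*t := by
        rw [inv_eq_one_div, div_le_iff₀ h1t]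
        nlinarith
      nlinarith [h2]
  have h0mem : (0:ℝ) ∈ Set.Icc (0:ℝ) (1/2) := by constructor <;> norm_num
  have hxmem : x ∈ Set.Icc (0:ℝ) (1/2) := ⟨h0, h1⟩
  have := key h0mem hxmem h0
  simp only [hf] at this
  simp at this
  linarith [this]

lemma factor_bound {a : ℝ} (h0 : 0 ≤ a) (h1 : a ≤ 1/4) :
    (Real.sqrt (1 - 2*a))⁻¹ ≤ Real.exp (a + 2*a^2) := by
  have hx : Real.exp (-(2*a + (2*a)^2)) ≤ 1 - 2*a :=
    log_ineq_aux' (by linarith) (by linarith)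
  have hpos : (0:ℝ) < 1 - 2*a := lt_of_lt_of_le (Real.exp_pos _) hx
  have hsqrt : Real.exp (-(a + 2*a^2)) ≤ Real.sqrt (1 - 2*a) := by
    rw [Real.le_sqrt (Real.exp_pos _).le hpos.le]
    calc Real.exp (-(a + 2*a^2)) ^ 2 = Real.exp (-(2*a + (2*a)^2)) := by
          rw [← Real.exp_nat_mul]; ring_nf
    _ ≤ 1 - 2*a := hx
  calc (Real.sqrt (1 - 2*a))⁻¹ ≤ (Real.exp (-(a + 2*a^2)))⁻¹ :=
        inv_anti₀ (Real.exp_pos _) hsqrt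
  _ = Real.exp (a + 2*a^2) := by rw [← Real.exp_neg, neg_neg]

lemma gauss_exp_sq (u : ℝ) (hu : u < 1/2) :
    Integrable (fun x => Real.exp (u * x^2)) (gaussianReal 0 1) ∧
    ∫ x, Real.exp (u * x^2) ∂(gaussianReal 0 1) = (Real.sqrt (1 - 2*u))⁻¹ := by
  have hb : (0:ℝ) < 1/2 - u := by linarith
  have hmeas : Measurable fun x : ℝ => (gaussianPDFReal 0 1 x).toNNReal :=
    (measurable_gaussianPDFReal 0 1).real_toNNReal
  have hd : gaussianReal 0 1
      = volume.withDensity (fun x => ((gaussianPDFReal 0 1 x).toNNReal : ℝ≥0∞)) := by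
    rw [gaussianReal_of_var_ne_zero 0 one_ne_zero]
    rfl
  have heq : (fun x : ℝ => (gaussianPDFReal 0 1 x).toNNReal • Real.exp (u * x^2))
      = fun x => (√(2 * π))⁻¹ * Real.exp (-(1/2 - u) * x^2) := by
    funext x
    rw [NNReal.smul_def, smul_eq_mul, Real.coe_toNNReal _ (gaussianPDFReal_nonneg 0 1 x)]
    simp only [gaussianPDFReal, NNReal.coe_one, mul_one, sub_zero]
    rw [mul_assoc, ← Real.exp_add]
    congr 2
    ring
  have hint2 : Integrable (fun x => (√(2 * π))⁻¹ * Real.exp (-(1/2 - u) * x^2)) volume :=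
    (integrable_exp_neg_mul_sq hb).const_mul _
  constructor
  · rw [hd, integrable_withDensity_iff_integrable_smul hmeas, heq]
    exact hint2
  · rw [hd, integral_withDensity_eq_integral_smul hmeas, heq]
    rw [integral_const_mul, integral_gaussian]
    rw [← Real.sqrt_inv, ← Real.sqrt_inv, ← Real.sqrt_mul (by positivity)]
    congr 1
    have hpi : (0:ℝ) < π := Real.pi_pos
    rw [show (1:ℝ) - 2*u = 2*(1/2 - u) by ring, div_eq_mul_inv, mul_inv, mul_inv]
    rw [← mul_assoc, mul_assoc (2:ℝ)⁻¹ π⁻¹ π, inv_mul_cancel₀ hpi.ne', mul_one]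

lemma chernoff_aux {Ω : Type*} [MeasurableSpace Ω] (P : Measure Ω) [IsProbabilityMeasure P]
    (r : ℕ) (s : Fin r → ℝ) (hs : ∀ l, 0 < s l)
    (X : Fin r → Ω → ℝ) (hXm : ∀ l, Measurable (X l))
    (hXi : iIndepFun X P)
    (hXg : ∀ l, Measure.map (X l) P = gaussianReal 0 1)
    (ε t : ℝ) (ht0 : 0 ≤ t) (ht1 : ∀ l, t * s l ≤ 1/4) :
    ENNReal.ofReal (1 - Real.exp (-(t*ε) + 2*t^2 * ∑ l, s l^2)) ≤
      P {ω | ∑ l, s l * X l ω ^ 2 ≤ (∑ l, s l) + ε} := by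
  classical
  set Y : Fin r → Ω → ℝ := fun l => (fun x => s l * x^2) ∘ X l with hY
  have hYm : ∀ l, Measurable (Y l) :=
    fun l => ((measurable_id.pow_const 2).const_mul (s l)).comp (hXm l)
  have hYi : iIndepFun Y P :=
    hXi.comp (fun l x => s l * x^2) (fun l => (measurable_id.pow_const 2).const_mul (s l))
  have hkey : ∀ l : Fin r, (fun ω => Real.exp (t * Y l ω))
      = (fun x => Real.exp ((t * s l) * x^2)) ∘ X l := by
    intro l; funext ω
    simp only [hY, Function.comp_apply]
    ring_nf
  have hu : ∀ l : Fin r, t * s l < 1/2 := fun l => lt_of_le_of_lt (ht1 l) (by norm_num)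
  have hint : ∀ l : Fin r, Integrable (fun ω => Real.exp (t * Y l ω)) P := by
    intro l
    rw [hkey l]
    have h1 := (gauss_exp_sq (t * s l) (hu l)).1
    rw [← hXg l] at h1
    exact (integrable_map_measure
      (((measurable_id.pow_const 2).const_mul _).exp.aestronglyMeasurable)
      (hXm l).aemeasurable).mp h1
  have hmgf : ∀ l : Fin r, mgf (Y l) P t = (Real.sqrt (1 - 2*(t * s l)))⁻¹ := by
    intro l
    rw [mgf]
    calc ∫ ω, Real.exp (t * Y l ω) ∂P
        = ∫ ω, ((fun x => Real.exp ((t * s l) * x^2)) ∘ X l) ω ∂P := by rw [← hkey l]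
      _ = ∫ x, Real.exp ((t * s l) * x^2) ∂(Measure.map (X l) P) :=
          (integral_map (hXm l).aemeasurable
            (((measurable_id.pow_const 2).const_mul _).exp.aestronglyMeasurable)).symm
      _ = (Real.sqrt (1 - 2*(t * s l)))⁻¹ := by
          rw [hXg l]; exact (gauss_exp_sq (t * s l) (hu l)).2
  -- Chernoff
  have hZint : Integrable (fun ω => Real.exp (t * (∑ l, Y l) ω)) P :=
    hYi.integrable_exp_mul_sum hYm (fun l _ => hint l)
  have hch := measure_ge_le_exp_mul_mgf (X := ∑ l, Y l) (μ := P) ((∑ l, s l) + ε) ht0 hZint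
  rw [hYi.mgf_sum hYm Finset.univ] at hch
  rw [Finset.prod_congr rfl (fun l _ => hmgf l)] at hch
  have hprod : (∏ l, (Real.sqrt (1 - 2*(t * s l)))⁻¹)
      ≤ ∏ l, Real.exp ((t * s l) + 2*(t * s l)^2) :=
    Finset.prod_le_prod (fun l _ => inv_nonneg.2 (Real.sqrt_nonneg _))
      (fun l _ => factor_bound (mul_nonneg ht0 (hs l).le) (ht1 l))
  have hsum : ∑ l, ((t * s l) + 2*(t * s l)^2)
      = t * (∑ l, s l) + 2*t^2 * (∑ l, s l^2) := by
    rw [Finset.sum_add_distrib, ← Finset.mul_sum]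
    congr 1
    rw [Finset.mul_sum]
    exact Finset.sum_congr rfl (fun l _ => by ring)
  have hbound : (P {ω | (∑ l, s l) + ε ≤ (∑ l, Y l) ω}).toReal
      ≤ Real.exp (-(t*ε) + 2*t^2 * ∑ l, s l^2) := by
    refine hch.trans ?_
    calc Real.exp (-t * ((∑ l, s l) + ε)) * ∏ l, (Real.sqrt (1 - 2*(t * s l)))⁻¹
        ≤ Real.exp (-t * ((∑ l, s l) + ε)) * ∏ l, Real.exp ((t * s l) + 2*(t * s l)^2) := by
          exact mul_le_mul_of_nonneg_left hprod (Real.exp_nonneg _)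
      _ = Real.exp (-(t*ε) + 2*t^2 * ∑ l, s l^2) := by
          rw [← Real.exp_sum, ← Real.exp_add, hsum]
          congr 1
          ring
  -- set manipulation
  set A : Set Ω := {ω | ∑ l, s l * X l ω ^ 2 ≤ (∑ l, s l) + ε} with hA
  have hgm : Measurable (fun ω => ∑ l, s l * X l ω ^ 2) :=
    Finset.measurable_sum _ (fun l _ => ((hXm l).pow_const 2).const_mul (s l))
  have hAm : MeasurableSet A := measurableSet_le hgm measurable_const
  have hsub : Aᶜ ⊆ {ω | (∑ l, s l) + ε ≤ (∑ l, Y l) ω} := by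
    intro ω hω
    simp only [hA, Set.mem_compl_iff, Set.mem_setOf_eq, not_le] at hω
    simp only [Set.mem_setOf_eq, Finset.sum_apply, hY, Function.comp_apply]
    exact le_of_lt hω
  have h1 : (P Aᶜ).toReal ≤ Real.exp (-(t*ε) + 2*t^2 * ∑ l, s l^2) :=
    le_trans (ENNReal.toReal_mono (measure_ne_top _ _) (measure_mono hsub)) hbound
  have hadd : (P A).toReal + (P Aᶜ).toReal = 1 := by
    rw [← ENNReal.toReal_add (measure_ne_top _ _) (measure_ne_top _ _),
      measure_add_measure_compl hAm, measure_univ, ENNReal.toReal_one]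
  calc ENNReal.ofReal (1 - Real.exp (-(t*ε) + 2*t^2 * ∑ l, s l^2))
      ≤ ENNReal.ofReal ((P A).toReal) := ENNReal.ofReal_le_ofReal (by linarith)
    _ = P A := ENNReal.ofReal_toReal (measure_ne_top _ _)

/-- For `ζ = Σ_l s_l X_l²` with `X_l` i.i.d. standard Gaussians,
`T = Σ_l s_l`, `σ² = Σ_l s_l²` and `s_max = max_l s_l`, for every `ε ≥ 0`:
`P(ζ ≤ T + ε) ≥ 1 − exp(−ε²/(8σ²))` if `ε ≤ σ²/s_max`, and
`P(ζ ≤ T + ε) ≥ 1 − exp(−ε/(8 s_max))` otherwise. -/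
theorem statement15 {Ω : Type*} [MeasurableSpace Ω] (P : Measure Ω) [IsProbabilityMeasure P]
    (r : ℕ) (hr : 1 ≤ r) (s : Fin r → ℝ) (hs : ∀ l, 0 < s l)
    (X : Fin r → Ω → ℝ) (hXm : ∀ l, Measurable (X l))
    (hXi : iIndepFun X P)
    (hXg : ∀ l, Measure.map (X l) P = gaussianReal 0 1)
    (ε : ℝ) (hε : 0 ≤ ε) :
    (ε ≤ (∑ l, s l ^ 2) / (⨆ l, s l) →
      ENNReal.ofReal (1 - Real.exp (-ε ^ 2 / (8 * ∑ l, s l ^ 2))) ≤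
        P {ω | ∑ l, s l * X l ω ^ 2 ≤ (∑ l, s l) + ε}) ∧
    ((∑ l, s l ^ 2) / (⨆ l, s l) < ε →
      ENNReal.ofReal (1 - Real.exp (-ε / (8 * ⨆ l, s l))) ≤
        P {ω | ∑ l, s l * X l ω ^ 2 ≤ (∑ l, s l) + ε}) := by
  have hne : Nonempty (Fin r) := ⟨⟨0, hr⟩⟩
  set m : ℝ := ⨆ l, s l with hm
  have hbdd : BddAbove (Set.range s) := Set.Finite.bddAbove (Set.finite_range s)
  have hle : ∀ l, s l ≤ m := fun l => le_ciSup hbdd l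
  have hmpos : 0 < m := lt_of_lt_of_le (hs ⟨0, hr⟩) (hle ⟨0, hr⟩)
  set σ2 : ℝ := ∑ l, s l ^ 2 with hσ2def
  have hσ2 : 0 < σ2 :=
    Finset.sum_pos (fun l _ => pow_pos (hs l) 2) Finset.univ_nonempty
  constructor
  · intro hcase
    have hεm : ε * m ≤ σ2 := (le_div_iff₀ hmpos).mp hcase
    set t : ℝ := ε / (4 * σ2) with ht
    have ht0 : 0 ≤ t := by positivity
    have ht1 : ∀ l, t * s l ≤ 1/4 := by
      intro l
      calc t * s l ≤ t * m := mul_le_mul_of_nonneg_left (hle l) ht0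
        _ ≤ 1/4 := by
            rw [ht, div_mul_eq_mul_div, div_le_div_iff₀ (by positivity) (by norm_num)]
            nlinarith
    have h := chernoff_aux P r s hs X hXm hXi hXg ε t ht0 ht1
    have heq : -(t*ε) + 2*t^2 * σ2 = -ε ^ 2 / (8 * σ2) := by
      rw [ht]
      field_simp
      ring
    rwa [heq] at h
  · intro hcase
    have hεm : σ2 < ε * m := (div_lt_iff₀ hmpos).mp hcase
    set t : ℝ := 1 / (4 * m) with ht
    have ht0 : 0 ≤ t := by positivity
    have ht1 : ∀ l, t * s l ≤ 1/4 := by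
      intro l
      rw [ht, div_mul_eq_mul_div, one_mul, div_le_div_iff₀ (by positivity) (by norm_num)]
      nlinarith [hle l]
    have h := chernoff_aux P r s hs X hXm hXi hXg ε t ht0 ht1
    have hexp : -(t*ε) + 2*t^2 * σ2 ≤ -ε / (8 * m) := by
      rw [ht]
      rw [show -(1/(4*m)*ε) + 2*(1/(4*m))^2 * σ2 = (σ2 - 2*(ε*m))/(8*m^2) by
        field_simp; ring]
      rw [show -ε / (8*m) = (-(ε*m))/(8*m^2) by field_simp]
      gcongr
      linarith
    calc ENNReal.ofReal (1 - Real.exp (-ε / (8 * m)))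
        ≤ ENNReal.ofReal (1 - Real.exp (-(t*ε) + 2*t^2 * σ2)) :=
          ENNReal.ofReal_le_ofReal (by linarith [Real.exp_le_exp.mpr hexp])
      _ ≤ _ := h
end

section
/- Let n ≥ 1 and r ≥ 1, let s_1, …, s_r be positive reals, and let ζ_1, …, ζ_n be real random variables on a common probability space, not necessarily independent, such that each ζ_j has the same distribution as Σ_{l=1}^r s_l·X_l² where X_1, …, X_r are i.i.d. standard real Gaussians. Then for every nonempty subset 𝒮 ⊆ {1,…,r}, writing r_𝒮 = |𝒮| and G_𝒮 = (∏_{l∈𝒮} s_l)^{1/r_𝒮}, and for every real γ, P( min_{1≤j≤n} ζ_j ≥ (r_𝒮/e)·n^{−2/r_𝒮}·G_𝒮·(1−γ) ) ≥ 1 − exp(−r_𝒮·γ/2). -/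
open MeasureTheory ProbabilityTheory
open scoped ENNReal NNReal

open Real in
private lemma st16_gauss_int (c : ℝ) (hc : 0 ≤ c) :
    ∫ x, Real.exp (-(c * x ^ 2)) ∂(gaussianReal 0 1) = Real.sqrt (1 / (2 * c + 1)) := by
  rw [gaussianReal_of_var_ne_zero 0 one_ne_zero]
  rw [show gaussianPDF 0 1 = fun x => ((gaussianPDFReal 0 1 x).toNNReal : ℝ≥0∞) from rfl]
  rw [integral_withDensity_eq_integral_smul
    ((measurable_gaussianPDFReal 0 1).real_toNNReal)]
  simp only [NNReal.smul_def, Real.coe_toNNReal _ (gaussianPDFReal_nonneg 0 1 _)]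
  simp only [gaussianPDFReal, NNReal.coe_one, mul_one, sub_zero]
  simp only [smul_eq_mul, one_div, mul_assoc, ← Real.exp_add]
  rw [integral_const_mul]
  have : ∀ x : ℝ, -x ^ 2 / 2 + -(c * x ^ 2) = -(c + 1/2) * x ^ 2 := by intro x; ring
  simp_rw [this]
  rw [integral_gaussian]
  rw [← Real.sqrt_inv]
  have hπ := Real.pi_pos
  rw [← Real.sqrt_mul (by positivity)]
  congr 1
  have h1 : (0:ℝ) < c + 1/2 := by linarith
  have h2 : (0:ℝ) < 2*c+1 := by linarith
  field_simp

private theorem st16_integral_pi {n : ℕ} {E : Type*} [MeasurableSpace E]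
    (μ : Fin n → Measure E) [∀ i, SigmaFinite (μ i)] (f : Fin n → E → ℝ) :
    ∫ x, ∏ i, f i (x i) ∂Measure.pi μ = ∏ i, ∫ x, f i x ∂μ i := by
  induction n with
  | zero => simp; rw [Measure.pi_of_empty μ]; simp
  | succ n ih =>
      calc
        _ = ∫ x : E × (Fin n → E),
            f 0 x.1 * ∏ i : Fin n, f i.succ (x.2 i)
            ∂(μ 0).prod (Measure.pi fun i : Fin n => μ i.succ) := by
          rw [← ((measurePreserving_piFinSuccAbove μ 0).symm).integral_comp']
          simp_rw [MeasurableEquiv.piFinSuccAbove_symm_apply, Fin.insertNthEquiv,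
            Fin.prod_univ_succ, Fin.insertNth_zero, Equiv.coe_fn_mk, Fin.cons_succ,
            Fin.zero_succAbove, Fin.cons_zero, cast_eq]
        _ = (∫ x, f 0 x ∂μ 0) * ∏ i : Fin n, ∫ x, f i.succ x ∂μ i.succ := by
          rw [← ih, ← integral_prod_mul]
        _ = ∏ i, ∫ x, f i x ∂μ i := by rw [Fin.prod_univ_succ]

private lemma st16_sum_sq_measurable (r : ℕ) (s : Fin r → ℝ) :
    Measurable (fun x : Fin r → ℝ => ∑ l, s l * x l ^ 2) :=
  Finset.measurable_sum _ fun l _ => by fun_prop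

private lemma st16_mgf_chi (r : ℕ) (s : Fin r → ℝ) (lam : ℝ) (hlam : 0 ≤ lam)
    (hs : ∀ l, 0 ≤ s l) :
    ∫ x, Real.exp (-lam * x) ∂(chiSqCombo r s)
      = ∏ l, Real.sqrt (1 / (2 * (lam * s l) + 1)) := by
  rw [chiSqCombo, integral_map (st16_sum_sq_measurable r s).aemeasurable
    (by exact (Real.continuous_exp.comp (continuous_const.mul continuous_id)).aestronglyMeasurable)]
  have : ∀ x : Fin r → ℝ, Real.exp (-lam * ∑ l, s l * x l ^ 2)
      = ∏ l, Real.exp (-(lam * s l * x l ^ 2)) := by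
    intro x
    rw [← Real.exp_sum, Finset.mul_sum]
    congr 1
    exact Finset.sum_congr rfl fun l _ => by ring
  simp_rw [this]
  rw [st16_integral_pi (fun _ => gaussianReal 0 1) (fun l x => Real.exp (-(lam * s l * x ^ 2)))]
  exact Finset.prod_congr rfl fun l _ => st16_gauss_int _ (mul_nonneg hlam (hs l))

private lemma st16_chi_nonneg_ae {Ω : Type*} [MeasurableSpace Ω] (P : Measure Ω)
    (r : ℕ) (s : Fin r → ℝ) (hs : ∀ l, 0 ≤ s l) (Z : Ω → ℝ) (hm : Measurable Z)
    (hd : Measure.map Z P = chiSqCombo r s) : ∀ᵐ ω ∂P, 0 ≤ Z ω := by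
  rw [ae_iff]
  have : {ω | ¬ 0 ≤ Z ω} = Z ⁻¹' (Set.Iio 0) := by ext ω; simp [Set.mem_preimage]
  rw [this, ← Measure.map_apply hm measurableSet_Iio, hd, chiSqCombo,
    Measure.map_apply (st16_sum_sq_measurable r s) measurableSet_Iio]
  convert measure_empty
  · ext x
    simp only [Set.mem_preimage, Set.mem_Iio, Set.mem_empty_iff_false, iff_false, not_lt]
    exact Finset.sum_nonneg fun l _ => mul_nonneg (hs l) (sq_nonneg _)
  · infer_instance

private lemma st16_single_bound {Ω : Type*} [MeasurableSpace Ω] (P : Measure Ω)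
    [IsProbabilityMeasure P]
    (r : ℕ) (s : Fin r → ℝ) (hs : ∀ l, 0 ≤ s l) (Z : Ω → ℝ) (hm : Measurable Z)
    (hd : Measure.map Z P = chiSqCombo r s) (lam t : ℝ) (hlam : 0 ≤ lam) :
    (P {ω | Z ω ≤ t}).toReal
      ≤ Real.exp (lam * t) * ∏ l, Real.sqrt (1 / (2 * (lam * s l) + 1)) := by
  have hZnn := st16_chi_nonneg_ae P r s hs Z hm hd
  have hint : Integrable (fun ω => Real.exp (-lam * Z ω)) P := by
    refine Integrable.mono' (integrable_const 1)
      ((Real.continuous_exp.comp (continuous_const.mul continuous_id)).measurable.comp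
        hm).aestronglyMeasurable ?_
    filter_upwards [hZnn] with ω hω
    rw [Real.norm_eq_abs, abs_of_pos (Real.exp_pos _)]
    exact Real.exp_le_one_iff.mpr (mul_nonpos_of_nonpos_of_nonneg (neg_nonpos.mpr hlam) hω)
  have h := measure_le_le_exp_mul_mgf (X := Z) (μ := P) (t := -lam) t
    (neg_nonpos.mpr hlam) hint
  rw [neg_neg] at h
  refine h.trans ?_
  rw [mgf]
  have : ∫ ω, Real.exp (-lam * Z ω) ∂P = ∫ x, Real.exp (-lam * x) ∂(chiSqCombo r s) := by
    rw [← hd]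
    exact (integral_map hm.aemeasurable
      ((Real.continuous_exp.comp (continuous_const.mul continuous_id)).aestronglyMeasurable)).symm
  rw [this, st16_mgf_chi r s lam hlam hs]

open Real in
private lemma st16_numeric_core (m : ℕ) (hm : 1 ≤ m) (N Pr γ : ℝ) (hN : 1 ≤ N) (hPr : 0 < Pr)
    (hγ0 : 0 ≤ γ) (hγ1 : γ < 1) :
    Real.exp ((m:ℝ)/2) *
      ((((m:ℝ) / ((m:ℝ) / Real.exp 1 * N ^ (-(2:ℝ)/(m:ℝ)) * Pr ^ ((1:ℝ)/(m:ℝ)) * (1-γ))) ^ m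
          * Pr)⁻¹) ^ ((1:ℝ)/2)
      ≤ N⁻¹ * Real.exp (-((m:ℝ)*γ)/2) := by
  have hkpos : (0:ℝ) < m := by exact_mod_cast hm
  have hNpos : (0:ℝ) < N := lt_of_lt_of_le one_pos hN
  have h1γ : (0:ℝ) < 1 - γ := by linarith
  set k : ℝ := (m:ℝ) with hk
  set u : ℝ := N ^ (-(2:ℝ)/k) * Pr ^ ((1:ℝ)/k) * (1-γ) with hu
  have hupos : 0 < u := by
    have h1 : (0:ℝ) < N ^ (-(2:ℝ)/k) := rpow_pos_of_pos hNpos _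
    have h2 : (0:ℝ) < Pr ^ ((1:ℝ)/k) := rpow_pos_of_pos hPr _
    positivity
  have ht : k / Real.exp 1 * N ^ (-(2:ℝ)/k) * Pr ^ ((1:ℝ)/k) * (1-γ)
      = k / Real.exp 1 * u := by rw [hu]; ring
  rw [ht]
  have hexp1 : (0:ℝ) < Real.exp 1 := Real.exp_pos 1
  have hinv : (k / (k / Real.exp 1 * u)) = Real.exp 1 / u := by
    rw [div_eq_div_iff (by positivity) (ne_of_gt hupos)]
    field_simp
  rw [hinv]
  have hstep : (((Real.exp 1 / u) ^ m * Pr)⁻¹) ^ ((1:ℝ)/2)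
      = (u / Real.exp 1) ^ (k/2) * (Pr ^ ((1:ℝ)/2))⁻¹ := by
    rw [mul_inv, Real.mul_rpow (by positivity) (by positivity)]
    congr 1
    · rw [← inv_pow, inv_div, ← Real.rpow_natCast (u / Real.exp 1) m, ← hk,
        ← Real.rpow_mul (by positivity : (0:ℝ) ≤ u / Real.exp 1) k ((1:ℝ)/2)]
      congr 1
      ring
    · rw [Real.inv_rpow hPr.le]
  rw [hstep]
  have hu2 : (u / Real.exp 1) ^ (k/2)
      = (N ^ (-(2:ℝ)/k)) ^ (k/2) * (Pr ^ ((1:ℝ)/k)) ^ (k/2) * (1-γ) ^ (k/2)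
        / Real.exp (k/2) := by
    rw [Real.div_rpow hupos.le hexp1.le, Real.exp_one_rpow, hu,
      Real.mul_rpow (by positivity) h1γ.le, Real.mul_rpow (by positivity) (by positivity)]
  rw [hu2]
  have hn1 : (N ^ (-(2:ℝ)/k)) ^ (k/2) = N⁻¹ := by
    rw [← Real.rpow_mul hNpos.le]
    have : -(2:ℝ)/k * (k/2) = -1 := by field_simp
    rw [this, Real.rpow_neg_one]
  have hp1 : (Pr ^ ((1:ℝ)/k)) ^ (k/2) = Pr ^ ((1:ℝ)/2) := by
    rw [← Real.rpow_mul hPr.le]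
    congr 1
    field_simp
  rw [hn1, hp1]
  have hPr12 : 0 < Pr ^ ((1:ℝ)/2) := Real.rpow_pos_of_pos hPr _
  have hexp2 : (0:ℝ) < Real.exp (k/2) := Real.exp_pos _
  have hsimp : Real.exp (k/2) * (N⁻¹ * Pr ^ ((1:ℝ)/2) * (1-γ) ^ (k/2) / Real.exp (k/2)
      * (Pr ^ ((1:ℝ)/2))⁻¹) = N⁻¹ * (1-γ) ^ (k/2) := by
    field_simp
  rw [hsimp]
  have hfin : (1-γ) ^ (k/2) ≤ Real.exp (-(k*γ)/2) := by
    have h1 : (1-γ : ℝ) ≤ Real.exp (-γ) := by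
      have := Real.add_one_le_exp (-γ); linarith
    have h2 : (1-γ : ℝ) ^ (k/2) ≤ (Real.exp (-γ)) ^ (k/2) :=
      Real.rpow_le_rpow h1γ.le h1 (by positivity)
    refine h2.trans_eq ?_
    rw [← Real.exp_mul]
    congr 1
    ring
  exact mul_le_mul_of_nonneg_left hfin (by positivity)

open Real in
private lemma st16_numeric {r : ℕ} (𝒮 : Finset (Fin r)) (h𝒮 : 𝒮.Nonempty) (s : Fin r → ℝ)
    (hs : ∀ l, 0 < s l) (n : ℕ) (hn : 1 ≤ n) (γ : ℝ) (hγ0 : 0 ≤ γ) (hγ1 : γ < 1) :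
    Real.exp ((𝒮.card : ℝ) /
        (2 * ((𝒮.card : ℝ) / Real.exp 1 * (n : ℝ) ^ (-(2 : ℝ) / 𝒮.card) *
          (∏ l ∈ 𝒮, s l) ^ ((1 : ℝ) / 𝒮.card) * (1 - γ))) *
        ((𝒮.card : ℝ) / Real.exp 1 * (n : ℝ) ^ (-(2 : ℝ) / 𝒮.card) *
          (∏ l ∈ 𝒮, s l) ^ ((1 : ℝ) / 𝒮.card) * (1 - γ))) *
      ∏ l ∈ 𝒮, Real.sqrt (1 / (2 * ((𝒮.card : ℝ) /
        (2 * ((𝒮.card : ℝ) / Real.exp 1 * (n : ℝ) ^ (-(2 : ℝ) / 𝒮.card) *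
          (∏ l ∈ 𝒮, s l) ^ ((1 : ℝ) / 𝒮.card) * (1 - γ))) * s l)))
      ≤ (n : ℝ)⁻¹ * Real.exp (-((𝒮.card : ℝ) * γ) / 2) := by
  have hm : 1 ≤ 𝒮.card := Finset.card_pos.mpr h𝒮
  have hkpos : (0:ℝ) < (𝒮.card : ℝ) := by exact_mod_cast hm
  have hnpos : (0:ℝ) < (n:ℝ) := by exact_mod_cast Nat.lt_of_lt_of_le Nat.zero_lt_one hn
  have hPr : 0 < ∏ l ∈ 𝒮, s l := Finset.prod_pos fun l _ => hs l
  have h1γ : (0:ℝ) < 1 - γ := by linarith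
  set k : ℝ := (𝒮.card : ℝ) with hk
  set Pr : ℝ := ∏ l ∈ 𝒮, s l with hPrdef
  set t : ℝ := k / Real.exp 1 * (n : ℝ) ^ (-(2 : ℝ) / k) * Pr ^ ((1 : ℝ) / k) * (1 - γ)
    with ht
  have htpos : 0 < t := by
    have h1 : (0:ℝ) < (n:ℝ) ^ (-(2:ℝ)/k) := rpow_pos_of_pos hnpos _
    have h2 : (0:ℝ) < Pr ^ ((1:ℝ)/k) := rpow_pos_of_pos hPr _
    rw [ht]; positivity
  clear_value t
  have hlt : k / (2 * t) * t = k / 2 := by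
    field_simp
  rw [hlt]
  have hfac : ∀ l ∈ 𝒮, Real.sqrt (1 / (2 * (k / (2 * t) * s l)))
      = ((k / t * s l)⁻¹) ^ ((1:ℝ)/2) := by
    intro l hl
    rw [Real.sqrt_eq_rpow]
    congr 1
    rw [inv_eq_one_div, div_eq_div_iff (by have := hs l; positivity) (by have := hs l; positivity)]
    field_simp
  rw [Finset.prod_congr rfl hfac,
    Real.finset_prod_rpow 𝒮 _ (fun l _ => by have := hs l; positivity) _,
    Finset.prod_inv_distrib, Finset.prod_mul_distrib, Finset.prod_const, ← hPrdef]
  have := st16_numeric_core 𝒮.card hm (n:ℝ) Pr γ (by exact_mod_cast hn) hPr hγ0 hγ1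
  rw [← hk, ← ht] at this
  exact this

/-- If each `ζ_j` (not necessarily independent) is distributed as
`Σ_l s_l X_l²` with `X_l` i.i.d. standard Gaussians, then for every nonempty `𝒮 ⊆ {1, …, r}`
and every real `γ`,
`P(min_j ζ_j ≥ (|𝒮|/e) n^{-2/|𝒮|} G_𝒮 (1−γ)) ≥ 1 − exp(−|𝒮|γ/2)`. -/
theorem statement16 {Ω : Type*} [MeasurableSpace Ω] (P : Measure Ω) [IsProbabilityMeasure P]
    (n r : ℕ) (hn : 1 ≤ n) (hr : 1 ≤ r) (s : Fin r → ℝ) (hs : ∀ l, 0 < s l)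
    (ζ : Fin n → Ω → ℝ) (hζm : ∀ j, Measurable (ζ j))
    (hζd : ∀ j, Measure.map (ζ j) P = chiSqCombo r s)
    (𝒮 : Finset (Fin r)) (h𝒮ne : 𝒮.Nonempty) (γ : ℝ) :
    ENNReal.ofReal (1 - Real.exp (-((𝒮.card : ℝ) * γ) / 2)) ≤
      P {ω |
        (𝒮.card : ℝ) / Real.exp 1 * (n : ℝ) ^ (-(2 : ℝ) / 𝒮.card) *
            (∏ l ∈ 𝒮, s l) ^ ((1 : ℝ) / 𝒮.card) * (1 - γ) ≤
          ⨅ j, ζ j ω} := by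
  haveI : Nonempty (Fin n) := ⟨⟨0, hn⟩⟩
  have hm : 1 ≤ 𝒮.card := Finset.card_pos.mpr h𝒮ne
  have hkpos : (0:ℝ) < (𝒮.card : ℝ) := by exact_mod_cast hm
  set T : ℝ := (𝒮.card : ℝ) / Real.exp 1 * (n : ℝ) ^ (-(2 : ℝ) / 𝒮.card) *
      (∏ l ∈ 𝒮, s l) ^ ((1 : ℝ) / 𝒮.card) * (1 - γ) with hT
  set A : Set Ω := {ω | T ≤ ⨅ j, ζ j ω} with hA
  have hAeq : A = ⋂ j, {ω | T ≤ ζ j ω} := by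
    ext ω
    simp only [hA, Set.mem_setOf_eq, Set.mem_iInter]
    constructor
    · intro h j
      exact h.trans (ciInf_le (Set.Finite.bddBelow (Set.finite_range _)) j)
    · intro h
      exact le_ciInf h
  have hAm : MeasurableSet A := by
    rw [hAeq]
    exact MeasurableSet.iInter fun j => measurableSet_le measurable_const (hζm j)
  by_cases hγ0 : γ ≤ 0
  · have : 1 - Real.exp (-((𝒮.card : ℝ) * γ) / 2) ≤ 0 := by
      have h1 : (0:ℝ) ≤ -((𝒮.card : ℝ) * γ) / 2 := by
        have : (𝒮.card : ℝ) * γ ≤ 0 := mul_nonpos_of_nonneg_of_nonpos hkpos.le hγ0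
        linarith
      have := Real.one_le_exp h1
      linarith
    rw [ENNReal.ofReal_eq_zero.mpr this]
    exact zero_le
  push_neg at hγ0
  by_cases hγ1 : 1 ≤ γ
  · -- threshold is nonpositive, event holds a.s.
    have hT0 : T ≤ 0 := by
      rw [hT]
      apply mul_nonpos_of_nonneg_of_nonpos
      · have h1 : (0:ℝ) ≤ (n:ℝ) ^ (-(2:ℝ)/(𝒮.card:ℝ)) := Real.rpow_nonneg (by positivity) _
        have h2 : (0:ℝ) ≤ (∏ l ∈ 𝒮, s l) ^ ((1:ℝ)/(𝒮.card:ℝ)) :=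
          Real.rpow_nonneg (Finset.prod_nonneg fun l _ => (hs l).le) _
        positivity
      · linarith
    have hae : ∀ᵐ ω ∂P, ω ∈ A := by
      have hall : ∀ᵐ ω ∂P, ∀ j, 0 ≤ ζ j ω :=
        MeasureTheory.ae_all_iff.mpr fun j =>
          st16_chi_nonneg_ae P r s (fun l => (hs l).le) (ζ j) (hζm j) (hζd j)
      filter_upwards [hall] with ω hω
      exact hT0.trans (le_ciInf hω)
    have hPA : P A = 1 := by
      rw [← prob_compl_eq_zero_iff hAm]
      have : Aᶜ = {ω | ¬ ω ∈ A} := rfl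
      rw [this, ← MeasureTheory.ae_iff]
      exact hae
    rw [hPA]
    exact ENNReal.ofReal_le_one.mpr (by have := Real.exp_pos (-((𝒮.card : ℝ) * γ) / 2); linarith)
  push_neg at hγ1
  -- main case 0 < γ < 1
  have hnpos : (0:ℝ) < (n:ℝ) := by exact_mod_cast Nat.lt_of_lt_of_le Nat.zero_lt_one hn
  have hPr : 0 < ∏ l ∈ 𝒮, s l := Finset.prod_pos fun l _ => hs l
  have hTpos : 0 < T := by
    rw [hT]
    have h1 : (0:ℝ) < (n:ℝ) ^ (-(2:ℝ)/(𝒮.card:ℝ)) := Real.rpow_pos_of_pos hnpos _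
    have h2 : (0:ℝ) < (∏ l ∈ 𝒮, s l) ^ ((1:ℝ)/(𝒮.card:ℝ)) := Real.rpow_pos_of_pos hPr _
    have h3 : (0:ℝ) < 1 - γ := by linarith
    positivity
  set lam : ℝ := (𝒮.card : ℝ) / (2 * T) with hlam
  have hlampos : 0 < lam := by rw [hlam]; positivity
  -- single random variable bound
  have hsingle : ∀ j, P {ω | ζ j ω ≤ T}
      ≤ ENNReal.ofReal ((n:ℝ)⁻¹ * Real.exp (-((𝒮.card : ℝ) * γ) / 2)) := by
    intro j
    have h1 := st16_single_bound P r s (fun l => (hs l).le) (ζ j) (hζm j) (hζd j) lam T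
      hlampos.le
    -- reduce the product over univ to over 𝒮, dropping the +1
    have hprod : ∏ l, Real.sqrt (1 / (2 * (lam * s l) + 1))
        ≤ ∏ l ∈ 𝒮, Real.sqrt (1 / (2 * (lam * s l))) := by
      have hsub : 𝒮 ⊆ Finset.univ := Finset.subset_univ 𝒮
      calc ∏ l, Real.sqrt (1 / (2 * (lam * s l) + 1))
          ≤ ∏ l ∈ 𝒮, Real.sqrt (1 / (2 * (lam * s l) + 1)) := by
            rw [← Finset.prod_sdiff hsub]
            apply mul_le_of_le_one_left
              (Finset.prod_nonneg fun l _ => Real.sqrt_nonneg _)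
            apply Finset.prod_le_one (fun l _ => Real.sqrt_nonneg _)
            intro l _
            apply Real.sqrt_le_one.mpr
            rw [div_le_one (by have := hs l; positivity)]
            have := hs l
            nlinarith [mul_pos hlampos (hs l)]
        _ ≤ ∏ l ∈ 𝒮, Real.sqrt (1 / (2 * (lam * s l))) := by
            apply Finset.prod_le_prod (fun l _ => Real.sqrt_nonneg _)
            intro l _
            apply Real.sqrt_le_sqrt
            apply one_div_le_one_div_of_le (by have := hs l; positivity)
            linarith
    have h2 : (P {ω | ζ j ω ≤ T}).toReal
        ≤ (n:ℝ)⁻¹ * Real.exp (-((𝒮.card : ℝ) * γ) / 2) := by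
      refine (h1.trans (mul_le_mul_of_nonneg_left hprod (Real.exp_pos _).le)).trans ?_
      have := st16_numeric 𝒮 h𝒮ne s hs n hn γ hγ0.le hγ1
      rw [← hT, ← hlam] at this
      -- match `2 * (lam * s l)` vs `2 * (lam * s l)` shapes
      convert this using 4 with l
    rw [← ENNReal.ofReal_toReal (measure_ne_top P _)]
    exact ENNReal.ofReal_le_ofReal h2
  -- union bound
  have hcompl : P Aᶜ ≤ ENNReal.ofReal (Real.exp (-((𝒮.card : ℝ) * γ) / 2)) := by
    have hsubset : Aᶜ ⊆ ⋃ j, {ω | ζ j ω ≤ T} := by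
      intro ω hω
      simp only [hA, Set.mem_compl_iff, Set.mem_setOf_eq, not_le] at hω
      obtain ⟨j, hj⟩ := exists_lt_of_ciInf_lt hω
      exact Set.mem_iUnion.mpr ⟨j, hj.le⟩
    calc P Aᶜ ≤ P (⋃ j, {ω | ζ j ω ≤ T}) := measure_mono hsubset
      _ ≤ ∑' j, P {ω | ζ j ω ≤ T} := measure_iUnion_le _
      _ ≤ ∑' (_ : Fin n), ENNReal.ofReal ((n:ℝ)⁻¹ * Real.exp (-((𝒮.card : ℝ) * γ) / 2)) :=
          ENNReal.tsum_le_tsum fun j => hsingle j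
      _ = (n : ℝ≥0∞) * ENNReal.ofReal ((n:ℝ)⁻¹ * Real.exp (-((𝒮.card : ℝ) * γ) / 2)) := by
          rw [tsum_fintype]
          simp [Finset.sum_const, Finset.card_univ, nsmul_eq_mul]
      _ = ENNReal.ofReal (Real.exp (-((𝒮.card : ℝ) * γ) / 2)) := by
          rw [← ENNReal.ofReal_natCast n, ← ENNReal.ofReal_mul (by positivity)]
          congr 1
          rw [← mul_assoc, mul_inv_cancel₀ (ne_of_gt hnpos), one_mul]
  have hsum := prob_add_prob_compl (μ := P) hAm
  rw [ENNReal.ofReal_sub _ (Real.exp_pos _).le, ENNReal.ofReal_one]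
  rw [tsub_le_iff_right]
  calc (1 : ℝ≥0∞) = P A + P Aᶜ := hsum.symm
    _ ≤ P A + ENNReal.ofReal (Real.exp (-((𝒮.card : ℝ) * γ) / 2)) :=
        add_le_add_right hcompl _
end
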